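/- arXiv:1411.4159 — 6 statements merged into one kernel-verified Lean document; each statement's English description precedes it below -/
import Mathlib

section
/- Let R be a ring with identity (not necessarily commutative). If A, B ∈ IPO(R), then the product AB again belongs to IPO(R); consequently IPO(R), equipped with this product (which is associative and has the zero ideal as an absorbing element), is a semigroup with zero. -/
open scoped Pointwise

section Aux

variable {R : Type*} [Ring R]

private lemma sg_mul_assoc (A B C : AddSubgroup R) : A * B * C = A * (B * C) := by
  apply AddSubgroup.toAddSubmonoid_injective
  simp only [AddSubgroup.mul_toAddSubmonoid]
  exact mul_assoc _ _ _

private lemma sg_bot_mul (A : AddSubgroup R) : (⊥ : AddSubgroup R) * A = ⊥ := by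
  apply AddSubgroup.toAddSubmonoid_injective
  simp [AddSubgroup.mul_toAddSubmonoid]

private lemma sg_mul_bot (A : AddSubgroup R) : A * (⊥ : AddSubgroup R) = ⊥ := by
  apply AddSubgroup.toAddSubmonoid_injective
  simp [AddSubgroup.mul_toAddSubmonoid]

private lemma sg_mul_mem {A B : AddSubgroup R} {a b : R} (ha : a ∈ A) (hb : b ∈ B) :
    a * b ∈ A * B :=
  AddSubmonoid.mul_mem_mul ha hb

private lemma sg_mul_le {A B C : AddSubgroup R} (h : ∀ a ∈ A, ∀ b ∈ B, a * b ∈ C) :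
    A * B ≤ C :=
  AddSubmonoid.mul_le.2 h

end Aux

/-- `I` is a left ideal of the ring `R`: an additive subgroup with `R·I ⊆ I`. -/
def IsLeftIdeal (R : Type*) [Ring R] (I : AddSubgroup R) : Prop :=
  ∀ r : R, ∀ x ∈ I, r * x ∈ I

/-- `I` is a right ideal of the ring `R`: an additive subgroup with `I·R ⊆ I`. -/
def IsRightIdeal (R : Type*) [Ring R] (I : AddSubgroup R) : Prop :=
  ∀ r : R, ∀ x ∈ I, x * r ∈ I

/-- `I` is a one-sided (left or right) ideal of `R`. -/
def IsOneSidedIdeal (R : Type*) [Ring R] (I : AddSubgroup R) : Prop :=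
  IsLeftIdeal R I ∨ IsRightIdeal R I

/-- `IPO(R)`: the set of all products `I*J` of two one-sided ideals of `R`.
Here `I * J` is the additive subgroup generated by `{a*b : a ∈ I, b ∈ J}`
(the pointwise product of additive subgroups). -/
def IPO (R : Type*) [Ring R] : Set (AddSubgroup R) :=
  {A | ∃ I J : AddSubgroup R, IsOneSidedIdeal R I ∧ IsOneSidedIdeal R J ∧ A = I * J}

/-- `A` is a vertex of `APOG(R) = Γ(IPO(R))`: a nonzero element of `IPO(R)` that is a
one-sided zero-divisor of the semigroup `IPO(R)`. -/
def APOGVertex (R : Type*) [Ring R] (A : AddSubgroup R) : Prop :=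
  A ∈ IPO R ∧ A ≠ ⊥ ∧ ∃ B ∈ IPO R, B ≠ ⊥ ∧ (A * B = ⊥ ∨ B * A = ⊥)

/-- The directed edge `A → B` of `APOG(R)`: both are vertices, `A ≠ B` and `A*B = 0`. -/
def APOGEdge (R : Type*) [Ring R] (A B : AddSubgroup R) : Prop :=
  APOGVertex R A ∧ APOGVertex R B ∧ A ≠ B ∧ A * B = ⊥

section Aux2

variable {R : Type*} [Ring R]

/-- `⊤ * X` is always a left ideal. -/
private lemma isLeftIdeal_top_mul (X : AddSubgroup R) : IsLeftIdeal R ((⊤ : AddSubgroup R) * X) := by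
  intro r x hx
  have h : (⊤ : AddSubgroup R) * (⊤ * X) ≤ ⊤ * X := by
    rw [← sg_mul_assoc]
    refine sg_mul_le fun a _ b hb => ?_
    exact sg_mul_mem (AddSubgroup.mem_top a) hb
  exact h (sg_mul_mem (AddSubgroup.mem_top r) hx)

/-- `X * ⊤` is always a right ideal. -/
private lemma isRightIdeal_mul_top (X : AddSubgroup R) : IsRightIdeal R (X * (⊤ : AddSubgroup R)) := by
  intro r x hx
  have h : (X * ⊤) * (⊤ : AddSubgroup R) ≤ X * ⊤ := by
    rw [sg_mul_assoc]
    refine sg_mul_le fun a ha b _ => ?_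
    exact sg_mul_mem ha (AddSubgroup.mem_top _)
  exact h (sg_mul_mem hx (AddSubgroup.mem_top r))

private lemma top_mul_of_left {I : AddSubgroup R} (hI : IsLeftIdeal R I) :
    (⊤ : AddSubgroup R) * I = I := by
  refine le_antisymm (sg_mul_le fun a _ b hb => hI a b hb) fun x hx => ?_
  have : (1 : R) * x ∈ (⊤ : AddSubgroup R) * I := sg_mul_mem (AddSubgroup.mem_top 1) hx
  simpa using this

private lemma mul_top_of_right {I : AddSubgroup R} (hI : IsRightIdeal R I) :
    I * (⊤ : AddSubgroup R) = I := by
  refine le_antisymm (sg_mul_le fun a ha b _ => hI b a ha) fun x hx => ?_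
  have : x * (1 : R) ∈ I * (⊤ : AddSubgroup R) := sg_mul_mem hx (AddSubgroup.mem_top 1)
  simpa using this

end Aux2

/-- `IPO(R)` is closed under the product of additive subgroups;
together with the fact that the zero ideal belongs to `IPO(R)`, that the product is
associative and that the zero ideal is absorbing, `IPO(R)` is a semigroup with zero. -/
theorem IPO_isSemigroupWithZero (R : Type*) [Ring R] :
    (∀ A ∈ IPO R, ∀ B ∈ IPO R, A * B ∈ IPO R) ∧
    (⊥ : AddSubgroup R) ∈ IPO R ∧
    (∀ A ∈ IPO R, ∀ B ∈ IPO R, ∀ C ∈ IPO R, A * B * C = A * (B * C)) ∧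
    (∀ A ∈ IPO R, (⊥ : AddSubgroup R) * A = ⊥ ∧ A * (⊥ : AddSubgroup R) = ⊥) := by
  refine ⟨?_, ?_, ?_, ?_⟩
  · rintro A ⟨I, J, hI, hJ, rfl⟩ B ⟨K, L, hK, hL, rfl⟩
    rcases hJ with hJl | hJr
    · -- J is a left ideal: ⊤ * J = J
      refine ⟨I * ⊤, ⊤ * (J * (K * L)), Or.inr (isRightIdeal_mul_top I),
        Or.inl (isLeftIdeal_top_mul _), ?_⟩
      conv_rhs => rw [← sg_mul_assoc (⊤ : AddSubgroup R) J (K * L), top_mul_of_left hJl,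
        sg_mul_assoc I ⊤ (J * (K * L)), ← sg_mul_assoc (⊤ : AddSubgroup R) J (K * L),
        top_mul_of_left hJl, ← sg_mul_assoc I J (K * L)]
    · -- J is a right ideal: J * ⊤ = J, hence (I*J)*⊤ = I*J
      have hA : (I * J) * (⊤ : AddSubgroup R) = I * J := by
        rw [sg_mul_assoc, mul_top_of_right hJr]
      refine ⟨(I * J) * ⊤, ⊤ * (K * L), Or.inr (isRightIdeal_mul_top _),
        Or.inl (isLeftIdeal_top_mul _), ?_⟩
      conv_rhs => rw [hA, ← sg_mul_assoc (I * J) (⊤ : AddSubgroup R) (K * L), hA]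
  · exact ⟨⊥, ⊥, Or.inl (fun r x hx => by
        simp only [AddSubgroup.mem_bot] at hx ⊢; rw [hx, mul_zero]),
      Or.inl (fun r x hx => by
        simp only [AddSubgroup.mem_bot] at hx ⊢; rw [hx, mul_zero]),
      (sg_mul_bot ⊥).symm⟩
  · intro A _ B _ C _
    exact sg_mul_assoc A B C
  · intro A _
    exact ⟨sg_bot_mul A, sg_mul_bot A⟩
end

section
/- Let S be a semigroup with zero such that A^l(S) = A^r(S). Then for any two distinct elements a, b ∈ D(S)*, at least one of the following holds: (i) ab = 0; (ii) there exists c ∈ D(S)* with ac = 0 and cb = 0; (iii) there exist c, d ∈ D(S)* with ac = 0, cd = 0, and db = 0. In particular, the directed graph Γ(S) is connected and every pair of distinct vertices is joined by a directed path of length at most 3. -/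
/-- `D(S)* = D(S) \ {0}`: the set of nonzero one-sided zero-divisors of the semigroup `S`. -/
def Dstar (S : Type*) [SemigroupWithZero S] : Set S :=
  {a | a ≠ 0 ∧ ∃ b : S, b ≠ 0 ∧ (a * b = 0 ∨ b * a = 0)}

/-- `A^l(S) = {a ∈ D(S)* : b*a = 0 for some b ∈ D(S)*}`. -/
def Aleft (S : Type*) [SemigroupWithZero S] : Set S :=
  {a | a ∈ Dstar S ∧ ∃ b ∈ Dstar S, b * a = 0}

/-- `A^r(S) = {a ∈ D(S)* : a*b = 0 for some b ∈ D(S)*}`. -/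
def Aright (S : Type*) [SemigroupWithZero S] : Set S :=
  {a | a ∈ Dstar S ∧ ∃ b ∈ Dstar S, a * b = 0}

/-- The directed edge `a → b` of `Γ(S)`: both are vertices, `a ≠ b` and `a*b = 0`. -/
def ZDEdge (S : Type*) [SemigroupWithZero S] (a b : S) : Prop :=
  a ∈ Dstar S ∧ b ∈ Dstar S ∧ a ≠ b ∧ a * b = 0


lemma both_sides {S : Type*} [SemigroupWithZero S] (h : Aleft S = Aright S)
    {a : S} (ha : a ∈ Dstar S) :
    (∃ c ∈ Dstar S, a * c = 0) ∧ (∃ d ∈ Dstar S, d * a = 0) := by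
  obtain ⟨b, hbne, hb⟩ := ha.2
  have hane := ha.1
  rcases hb with hb | hb
  · have hbD : b ∈ Dstar S := ⟨hbne, a, hane, Or.inr hb⟩
    have hr : a ∈ Aright S := ⟨ha, b, hbD, hb⟩
    have hl : a ∈ Aleft S := h ▸ hr
    exact ⟨hr.2, hl.2⟩
  · have hbD : b ∈ Dstar S := ⟨hbne, a, hane, Or.inl hb⟩
    have hl : a ∈ Aleft S := ⟨ha, b, hbD, hb⟩
    have hr : a ∈ Aright S := h ▸ hl
    exact ⟨hr.2, hl.2⟩

lemma key_path {S : Type*} [SemigroupWithZero S] (h : Aleft S = Aright S)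
    {a b : S} (ha : a ∈ Dstar S) (hb : b ∈ Dstar S) (hab : a ≠ b) :
    ZDEdge S a b ∨ (∃ c, ZDEdge S a c ∧ ZDEdge S c b) ∨
      ∃ c d, ZDEdge S a c ∧ ZDEdge S c d ∧ ZDEdge S d b := by
  by_cases hab0 : a * b = 0
  · exact Or.inl ⟨ha, hb, hab, hab0⟩
  obtain ⟨⟨c, hcD, hac⟩, -⟩ := both_sides h ha
  obtain ⟨-, d, hdD, hdb⟩ := both_sides h hb
  by_cases hcb : c * b = 0
  · refine Or.inr (Or.inl ⟨c, ⟨ha, hcD, ?_, hac⟩, ⟨hcD, hb, ?_, hcb⟩⟩)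
    · rintro rfl; exact hab0 hcb
    · rintro rfl; exact hab0 hac
  by_cases had : a * d = 0
  · refine Or.inr (Or.inl ⟨d, ⟨ha, hdD, ?_, had⟩, ⟨hdD, hb, ?_, hdb⟩⟩)
    · rintro rfl; exact hab0 hdb
    · rintro rfl; exact hab0 had
  by_cases hcd : c * d = 0
  · refine Or.inr (Or.inr ⟨c, d, ⟨ha, hcD, ?_, hac⟩, ⟨hcD, hdD, ?_, hcd⟩,
      ⟨hdD, hb, ?_, hdb⟩⟩)
    · rintro rfl; exact had hcd
    · rintro rfl; exact hcb hdb
    · rintro rfl; exact hcb hcd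
  · have hacd : a * (c * d) = 0 := by rw [← mul_assoc, hac, zero_mul]
    have hcdb : (c * d) * b = 0 := by rw [mul_assoc, hdb, mul_zero]
    have hmD : c * d ∈ Dstar S := ⟨hcd, a, ha.1, Or.inr hacd⟩
    refine Or.inr (Or.inl ⟨c * d, ⟨ha, hmD, ?_, hacd⟩, ⟨hmD, hb, ?_, hcdb⟩⟩)
    · rintro rfl; exact hab0 hcdb
    · rintro rfl; exact hab0 hacd

/-- If `A^l(S) = A^r(S)`, then any two distinct vertices `a, b ∈ D(S)*`
are joined as in (i), (ii) or (iii); in particular `Γ(S)` is connected and every pair of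
distinct vertices is joined by a directed path of length at most `3`. -/
theorem Gamma_connected_of_Aleft_eq_Aright (S : Type*) [SemigroupWithZero S]
    (h : Aleft S = Aright S) :
    (∀ a ∈ Dstar S, ∀ b ∈ Dstar S, a ≠ b →
      a * b = 0 ∨
      (∃ c ∈ Dstar S, a * c = 0 ∧ c * b = 0) ∨
      (∃ c ∈ Dstar S, ∃ d ∈ Dstar S, a * c = 0 ∧ c * d = 0 ∧ d * b = 0)) ∧
    (∀ a ∈ Dstar S, ∀ b ∈ Dstar S, a ≠ b →
      (Relation.TransGen (ZDEdge S) a b ∧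
        (ZDEdge S a b ∨ (∃ c, ZDEdge S a c ∧ ZDEdge S c b) ∨
          ∃ c d, ZDEdge S a c ∧ ZDEdge S c d ∧ ZDEdge S d b))) := by
  constructor
  · intro a ha b hb hab
    rcases key_path h ha hb hab with e | ⟨c, e1, e2⟩ | ⟨c, d, e1, e2, e3⟩
    · exact Or.inl e.2.2.2
    · exact Or.inr (Or.inl ⟨c, e1.2.1, e1.2.2.2, e2.2.2.2⟩)
    · exact Or.inr (Or.inr ⟨c, e1.2.1, d, e2.2.1, e1.2.2.2, e2.2.2.2, e3.2.2.2⟩)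
  · intro a ha b hb hab
    rcases key_path h ha hb hab with e | ⟨c, e1, e2⟩ | ⟨c, d, e1, e2, e3⟩
    · exact ⟨Relation.TransGen.single e, Or.inl e⟩
    · exact ⟨(Relation.TransGen.single e1).tail e2, Or.inr (Or.inl ⟨c, e1, e2⟩)⟩
    · exact ⟨((Relation.TransGen.single e1).tail e2).tail e3,
        Or.inr (Or.inr ⟨c, d, e1, e2, e3⟩)⟩
end

section
/- Let S be a semigroup with zero. If the directed graph Γ(S) is connected (for any two distinct vertices a, b ∈ D(S)* there is a directed path from a to b all of whose vertices lie in D(S)*), then A^l(S) = A^r(S). -/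
/-- If the directed zero-divisor graph `Γ(S)` is connected (any two
distinct vertices are joined by a directed path through vertices), then
`A^l(S) = A^r(S)`. -/
theorem Aleft_eq_Aright_of_Gamma_connected (S : Type*) [SemigroupWithZero S]
    (h : ∀ a ∈ Dstar S, ∀ b ∈ Dstar S, a ≠ b → Relation.TransGen (ZDEdge S) a b) :
    Aleft S = Aright S := by
  ext a
  constructor
  · rintro ⟨ha, b, hb, hba⟩
    refine ⟨ha, ?_⟩
    by_cases hab : a = b
    · exact ⟨a, ha, by rw [hab] at hba ⊢; exact hba⟩
    · obtain ⟨c, hc⟩ : ∃ c, ZDEdge S a c := by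
        induction h a ha b hb hab using Relation.TransGen.head_induction_on with
        | single he => exact ⟨_, he⟩
        | head he _ _ => exact ⟨_, he⟩
      exact ⟨c, hc.2.1, hc.2.2.2⟩
  · rintro ⟨ha, b, hb, hab⟩
    refine ⟨ha, ?_⟩
    by_cases hba : b = a
    · exact ⟨a, ha, hba ▸ hab⟩
    · cases h b hb a ha hba with
      | single he => exact ⟨b, hb, he.2.2.2⟩
      | tail _ he => exact ⟨_, he.1, he.2.2.2⟩
end

section
/- Let R be a ring with identity that is left and right Artinian and is a Duo ring (every left ideal and every right ideal of R is a two-sided ideal). Then A^l(IPO(R)) = A^r(IPO(R)) = IPO(R) \ {0, R}. Consequently, APOG(R) is connected and every pair of distinct vertices of APOG(R) is joined by a directed path of length at most 3. -/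
open scoped Pointwise

/-- `APOG(R)` is connected: for any two distinct vertices there is a directed path from
the first to the second through vertices. -/
def APOGConnected (R : Type*) [Ring R] : Prop :=
  ∀ A B : AddSubgroup R, APOGVertex R A → APOGVertex R B → A ≠ B →
    Relation.TransGen (APOGEdge R) A B

/-- There is a directed path of length at most `3` from `A` to `B` in `APOG(R)`. -/
def APOGPathLe3 (R : Type*) [Ring R] (A B : AddSubgroup R) : Prop :=
  APOGEdge R A B ∨ (∃ C, APOGEdge R A C ∧ APOGEdge R C B) ∨
    ∃ C D, APOGEdge R A C ∧ APOGEdge R C D ∧ APOGEdge R D B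

/-- `A^l(IPO(R))`. -/
def AleftIPO (R : Type*) [Ring R] : Set (AddSubgroup R) :=
  {A | APOGVertex R A ∧ ∃ B, APOGVertex R B ∧ B * A = ⊥}

/-- `A^r(IPO(R))`. -/
def ArightIPO (R : Type*) [Ring R] : Set (AddSubgroup R) :=
  {A | APOGVertex R A ∧ ∃ B, APOGVertex R B ∧ A * B = ⊥}

/-- A family `T` of additive subgroups satisfies the descending chain condition. -/
def DCCOn (R : Type*) [Ring R] (T : Set (AddSubgroup R)) : Prop :=
  ∀ f : ℕ → AddSubgroup R, (∀ n, f n ∈ T) → (∀ n, f (n + 1) ≤ f n) →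
    ∃ N, ∀ n, N ≤ n → f n = f N

namespace APOGAux

variable {R : Type*} [Ring R]

lemma mul_mem_mul' {M N : AddSubgroup R} {a b : R} (ha : a ∈ M) (hb : b ∈ N) :
    a * b ∈ M * N := AddSubmonoid.mul_mem_mul ha hb

lemma mul_le' {M N P : AddSubgroup R} : M * N ≤ P ↔ ∀ m ∈ M, ∀ n ∈ N, m * n ∈ P :=
  AddSubmonoid.mul_le (M := M.toAddSubmonoid) (N := N.toAddSubmonoid) (P := P.toAddSubmonoid)

lemma mul_induction_on' {M N : AddSubgroup R} {C : R → Prop} {r : R} (hr : r ∈ M * N)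
    (hm : ∀ m ∈ M, ∀ n ∈ N, C (m * n)) (ha : ∀ x y, C x → C y → C (x + y)) : C r :=
  AddSubmonoid.mul_induction_on hr hm ha

lemma exists_ne_zero {A : AddSubgroup R} (h : A ≠ ⊥) : ∃ a ∈ A, a ≠ 0 := by
  by_contra hc
  push_neg at hc
  refine h ?_
  ext x
  simp only [AddSubgroup.mem_bot]
  exact ⟨fun hx => hc x hx, fun hx => hx ▸ A.zero_mem⟩

lemma leftIdeal_mul {A B : AddSubgroup R} (hA : IsLeftIdeal R A) : IsLeftIdeal R (A * B) := by
  intro r x hx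
  refine mul_induction_on' (C := fun t => r * t ∈ A * B) hx ?_ ?_
  · intro m hm n hn
    rw [← mul_assoc]
    exact mul_mem_mul' (hA r m hm) hn
  · intro x y hx hy
    rw [mul_add]
    exact add_mem hx hy

lemma rightIdeal_mul {A B : AddSubgroup R} (hB : IsRightIdeal R B) : IsRightIdeal R (A * B) := by
  intro r x hx
  refine mul_induction_on' (C := fun t => t * r ∈ A * B) hx ?_ ?_
  · intro m hm n hn
    rw [mul_assoc]
    exact mul_mem_mul' hm (hB r n hn)
  · intro x y hx hy
    rw [add_mul]
    exact add_mem hx hy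

/-- Right annihilator of `A`. -/
def rAnn (A : AddSubgroup R) : AddSubgroup R where
  carrier := {x | ∀ a ∈ A, a * x = 0}
  zero_mem' := fun a _ => mul_zero a
  add_mem' := fun {x y} hx hy a ha => by rw [mul_add, hx a ha, hy a ha, add_zero]
  neg_mem' := fun {x} hx a ha => by rw [mul_neg, hx a ha, neg_zero]

lemma mem_rAnn {A : AddSubgroup R} {x : R} : x ∈ rAnn A ↔ ∀ a ∈ A, a * x = 0 := Iff.rfl

/-- Left annihilator of `A`. -/
def lAnn (A : AddSubgroup R) : AddSubgroup R where
  carrier := {x | ∀ a ∈ A, x * a = 0}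
  zero_mem' := fun a _ => zero_mul a
  add_mem' := fun {x y} hx hy a ha => by rw [add_mul, hx a ha, hy a ha, add_zero]
  neg_mem' := fun {x} hx a ha => by rw [neg_mul, hx a ha, neg_zero]

lemma mem_lAnn {A : AddSubgroup R} {x : R} : x ∈ lAnn A ↔ ∀ a ∈ A, x * a = 0 := Iff.rfl

/-- The "corner" `fR` of a central idempotent `f`. -/
def corner (f : R) : AddSubgroup R where
  carrier := {x | f * x = x}
  zero_mem' := mul_zero f
  add_mem' := fun {x y} hx hy => by
    simp only [Set.mem_setOf_eq] at *
    rw [mul_add, hx, hy]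
  neg_mem' := fun {x} hx => by
    simp only [Set.mem_setOf_eq] at *
    rw [mul_neg, hx]

lemma mem_corner {f x : R} : x ∈ corner f ↔ f * x = x := Iff.rfl

lemma corner_one : corner (1 : R) = ⊤ := by
  ext x
  simp [mem_corner]

/-- From DCC on left ideals, any nonempty family of left ideals has a minimal element. -/
lemma dcc_minimal (hartl : DCCOn R {I | IsLeftIdeal R I}) (S : Set (AddSubgroup R))
    (hS : ∀ J ∈ S, IsLeftIdeal R J) (hne : S.Nonempty) :
    ∃ J ∈ S, ∀ J' ∈ S, J' ≤ J → J' = J := by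
  by_contra hc
  push_neg at hc
  have hstep : ∀ J : {J // J ∈ S}, ∃ J' : {J // J ∈ S}, J'.1 ≤ J.1 ∧ J'.1 ≠ J.1 := by
    rintro ⟨J, hJ⟩
    obtain ⟨J', hJ'S, hle, hne'⟩ := hc J hJ
    exact ⟨⟨J', hJ'S⟩, hle, hne'⟩
  choose step hle hne' using hstep
  obtain ⟨J₀, hJ₀⟩ := hne
  set F : ℕ → {J // J ∈ S} := fun n => step^[n] ⟨J₀, hJ₀⟩ with hF
  have hsucc : ∀ n, F (n + 1) = step (F n) := fun n => Function.iterate_succ_apply' step n _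
  have hdesc : ∀ n, ((F (n + 1) : {J // J ∈ S}) : AddSubgroup R) ≤ F n := by
    intro n
    rw [hsucc]
    exact hle (F n)
  obtain ⟨N, hN⟩ := hartl (fun n => (F n).1) (fun n => hS _ (F n).2) hdesc
  have h1 : (F (N + 1)).1 = (F N).1 := hN (N + 1) (Nat.le_succ N)
  rw [hsucc] at h1
  exact hne' (F N) h1

/-- `aR` as an additive subgroup. -/
def setR (a : R) : AddSubgroup R where
  carrier := {x | ∃ r, x = a * r}
  zero_mem' := ⟨0, (mul_zero a).symm⟩
  add_mem' := by
    rintro x y ⟨r, hr⟩ ⟨s, hs⟩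
    exact ⟨r + s, by rw [hr, hs, mul_add]⟩
  neg_mem' := by
    rintro x ⟨r, hr⟩
    exact ⟨-r, by rw [hr, mul_neg]⟩

/-- `Ra` as an additive subgroup. -/
def setL (a : R) : AddSubgroup R where
  carrier := {x | ∃ r, x = r * a}
  zero_mem' := ⟨0, (zero_mul a).symm⟩
  add_mem' := by
    rintro x y ⟨r, hr⟩ ⟨s, hs⟩
    exact ⟨r + s, by rw [hr, hs, add_mul]⟩
  neg_mem' := by
    rintro x ⟨r, hr⟩
    exact ⟨-r, by rw [hr, neg_mul]⟩

lemma setR_rightIdeal (a : R) : IsRightIdeal R (setR a) := by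
  rintro r x ⟨s, hs⟩
  exact ⟨s * r, by rw [hs, mul_assoc]⟩

lemma setL_leftIdeal (a : R) : IsLeftIdeal R (setL a) := by
  rintro r x ⟨s, hs⟩
  exact ⟨r * s, by rw [hs, mul_assoc]⟩

section Duo

variable (hduo : ∀ I : AddSubgroup R, IsOneSidedIdeal R I → IsLeftIdeal R I ∧ IsRightIdeal R I)

include hduo in
/-- In a duo ring, `r·a ∈ aR`. -/
lemma duo_mem_left (a r : R) : ∃ r', r * a = a * r' := by
  have hl := (hduo _ (Or.inr (setR_rightIdeal a))).1
  obtain ⟨r', h⟩ := hl r a ⟨1, (mul_one a).symm⟩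
  exact ⟨r', h⟩

include hduo in
/-- In a duo ring, `a·r ∈ Ra`. -/
lemma duo_mem_right (a r : R) : ∃ r', a * r = r' * a := by
  have hr := (hduo _ (Or.inl (setL_leftIdeal a))).2
  obtain ⟨r', h⟩ := hr r a ⟨1, (one_mul a).symm⟩
  exact ⟨r', h⟩

include hduo in
/-- In a duo ring, idempotents are central. -/
lemma idem_central {g : R} (hg : g * g = g) (r : R) : g * r = r * g := by
  obtain ⟨y, hy⟩ := duo_mem_left hduo g r
  -- hy : r * g = g * y
  have h1 : (g * r) * g = r * g := by
    rw [mul_assoc, hy, ← mul_assoc, hg]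
  obtain ⟨y', hy'⟩ := duo_mem_right hduo g r
  -- hy' : g * r = y' * g
  have h2 : (g * r) * g = g * r := by
    rw [hy', mul_assoc, hg]
  rw [← h2, h1]

end Duo

/-- Construction of an idempotent from strong π-regularity. -/
lemma exists_idem_of_pow (hartl : DCCOn R {I | IsLeftIdeal R I})
    (hartr : DCCOn R {I | IsRightIdeal R I}) (e : R)
    (hpow : ∀ n, 1 ≤ n → e ^ n ≠ 0) :
    ∃ g s : R, g = e * s ∧ g * g = g ∧ g ≠ 0 := by
  obtain ⟨N₁, hN₁⟩ := hartr (fun n => setR (e ^ n))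
    (fun n => setR_rightIdeal _)
    (fun n => by rintro x ⟨s, hs⟩; exact ⟨e * s, by rw [hs, pow_succ, mul_assoc]⟩)
  obtain ⟨N₂, hN₂⟩ := hartl (fun n => setL (e ^ n))
    (fun n => setL_leftIdeal _)
    (fun n => by rintro x ⟨s, hs⟩; exact ⟨s * e, by rw [hs, pow_succ', mul_assoc]⟩)
  set M := N₁ + N₂ + 1 with hM
  have hR : setR (e ^ (2 * M)) = setR (e ^ M) :=
    (hN₁ (2 * M) (by omega)).trans (hN₁ M (by omega)).symm
  have hL : setL (e ^ (2 * M)) = setL (e ^ M) :=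
    (hN₂ (2 * M) (by omega)).trans (hN₂ M (by omega)).symm
  have heM : e ^ M ∈ setR (e ^ (2 * M)) := by
    rw [hR]; exact ⟨1, (mul_one _).symm⟩
  obtain ⟨s, hs⟩ := heM
  have heM' : e ^ M ∈ setL (e ^ (2 * M)) := by
    rw [hL]; exact ⟨1, (one_mul _).symm⟩
  obtain ⟨t, ht⟩ := heM'
  set p := e ^ M with hp
  have hp2 : e ^ (2 * M) = p * p := by rw [two_mul, pow_add]
  rw [hp2] at hs ht
  -- hs : p = (p * p) * s,  ht : p = t * (p * p)
  have hps : p * s = t * p := by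
    calc p * s = (t * (p * p)) * s := by rw [← ht]
    _ = t * ((p * p) * s) := by rw [mul_assoc]
    _ = t * p := by rw [← hs]
  have hpg : p * (p * s) = p := by rw [← mul_assoc, ← hs]
  have hgg : (p * s) * (p * s) = p * s := by
    calc (p * s) * (p * s) = (t * p) * (p * s) := by rw [hps]
    _ = t * (p * (p * s)) := by rw [mul_assoc]
    _ = t * p := by rw [hpg]
    _ = p * s := by rw [← hps]
  have hpne : p ≠ 0 := hpow M (by omega)
  have hgne : p * s ≠ 0 := by
    intro h0
    exact hpne (by rw [← hpg, h0, mul_zero])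
  have hMpos : M = (M - 1) + 1 := by omega
  refine ⟨p * s, e ^ (M - 1) * s, ?_, hgg, hgne⟩
  have hpe : p = e * e ^ (M - 1) := by
    rw [hp]
    conv_lhs => rw [hMpos]
    rw [pow_succ']
  rw [hpe, mul_assoc]

section Main

variable (hartl : DCCOn R {I | IsLeftIdeal R I}) (hartr : DCCOn R {I | IsRightIdeal R I})
variable (hduo : ∀ I : AddSubgroup R, IsOneSidedIdeal R I → IsLeftIdeal R I ∧ IsRightIdeal R I)

include hartl hartr hduo in
/-- Main annihilator lemma: a proper nonzero ideal of a corner has nonzero two-sided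
annihilators inside the corner. -/
lemma main_ann :
    ∀ (A : AddSubgroup R) (f : R), f * f = f → (∀ r, f * r = r * f) →
      IsLeftIdeal R A → IsRightIdeal R A → A ≠ ⊥ → A ≠ corner f → A ≤ corner f →
      (∃ z ∈ corner f, z ≠ 0 ∧ ∀ a ∈ A, a * z = 0) ∧
      (∃ w ∈ corner f, w ≠ 0 ∧ ∀ a ∈ A, w * a = 0) := by
  set Bad : Set (AddSubgroup R) := {A | ∃ f : R, f * f = f ∧ (∀ r, f * r = r * f) ∧
    IsLeftIdeal R A ∧ IsRightIdeal R A ∧ A ≠ ⊥ ∧ A ≠ corner f ∧ A ≤ corner f ∧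
    ¬((∃ z ∈ corner f, z ≠ 0 ∧ ∀ a ∈ A, a * z = 0) ∧
      (∃ w ∈ corner f, w ≠ 0 ∧ ∀ a ∈ A, w * a = 0))} with hBadDef
  suffices hBad : Bad = ∅ by
    intro A f hfi hfc hAl hAr hAbot hAtop hAle
    by_contra hcc
    have hmem : A ∈ Bad := ⟨f, hfi, hfc, hAl, hAr, hAbot, hAtop, hAle, hcc⟩
    rw [hBad] at hmem
    exact hmem
  by_contra hBadne
  obtain ⟨A, hABad, hmin⟩ := dcc_minimal hartl Bad
    (by rintro J ⟨f, -, -, hl, -⟩; exact hl) (Set.nonempty_iff_ne_empty.2 hBadne)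
  obtain ⟨f, hfi, hfc, hAl, hAr, hAbot, hAcor, hAle, hnc⟩ := hABad
  -- smaller ideals are good
  have hgood : ∀ (B : AddSubgroup R) (f' : R), f' * f' = f' → (∀ r, f' * r = r * f') →
      IsLeftIdeal R B → IsRightIdeal R B → B ≠ ⊥ → B ≠ corner f' → B ≤ corner f' → B < A →
      (∃ z ∈ corner f', z ≠ 0 ∧ ∀ a ∈ B, a * z = 0) ∧
      (∃ w ∈ corner f', w ≠ 0 ∧ ∀ a ∈ B, w * a = 0) := by
    intro B f' h1 h2 h3 h4 h5 h6 h7 hlt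
    by_contra hcc
    exact hlt.ne (hmin B ⟨f', h1, h2, h3, h4, h5, h6, h7, hcc⟩ hlt.le)
  have hA2le : A * A ≤ A := mul_le'.2 fun m hm n hn => hAr n m hm
  have hAlef : ∀ a ∈ A, f * a = a := fun a ha => hAle ha
  rcases lt_or_eq_of_le hA2le with hlt | hAA
  · -- A*A < A
    by_cases hbot2 : A * A = ⊥
    · obtain ⟨a, haA, hane⟩ := exists_ne_zero hAbot
      refine hnc ⟨⟨a, hAle haA, hane, fun x hx => ?_⟩, ⟨a, hAle haA, hane, fun x hx => ?_⟩⟩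
      · have h := mul_mem_mul' hx haA
        rw [hbot2] at h
        exact AddSubgroup.mem_bot.1 h
      · have h := mul_mem_mul' haA hx
        rw [hbot2] at h
        exact AddSubgroup.mem_bot.1 h
    · have hcor2 : A * A ≠ corner f := by
        intro h
        exact hAcor (le_antisymm hAle (h ▸ hA2le))
      obtain ⟨⟨z₂, hz₂c, hz₂ne, hz₂⟩, ⟨w₂, hw₂c, hw₂ne, hw₂⟩⟩ :=
        hgood (A * A) f hfi hfc (leftIdeal_mul hAl) (rightIdeal_mul hAr) hbot2 hcor2
          (hA2le.trans hAle) hlt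
      refine hnc ⟨?_, ?_⟩
      · by_cases hz : ∀ a ∈ A, a * z₂ = 0
        · exact ⟨z₂, hz₂c, hz₂ne, hz⟩
        · push_neg at hz
          obtain ⟨x₀, hx₀, hx₀ne⟩ := hz
          refine ⟨x₀ * z₂, ?_, hx₀ne, fun a ha => ?_⟩
          · show f * (x₀ * z₂) = x₀ * z₂
            rw [← mul_assoc, hAlef x₀ hx₀]
          · rw [← mul_assoc]
            exact hz₂ _ (mul_mem_mul' ha hx₀)
      · by_cases hw : ∀ a ∈ A, w₂ * a = 0
        · exact ⟨w₂, hw₂c, hw₂ne, hw⟩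
        · push_neg at hw
          obtain ⟨x₀, hx₀, hx₀ne⟩ := hw
          refine ⟨w₂ * x₀, ?_, hx₀ne, fun a ha => ?_⟩
          · show f * (w₂ * x₀) = w₂ * x₀
            rw [← mul_assoc, show f * w₂ = w₂ from hw₂c]
          · rw [mul_assoc]
            exact hw₂ _ (mul_mem_mul' hx₀ ha)
  · -- A*A = A
    have hG : ∃ g ∈ A, g ≠ 0 ∧ g * g = g := by
      rcases Classical.em ((∃ z ∈ corner f, z ≠ 0 ∧ ∀ a ∈ A, a * z = 0) ∧
          (∃ w ∈ corner f, w ≠ 0 ∧ ∀ a ∈ A, w * a = 0)) with hcon | hcon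
      · exact absurd hcon hnc
      rcases not_and_or.1 hcon with hz | hw
      · -- no right annihilator: build idempotent
        push_neg at hz
        set Fam : Set (AddSubgroup R) :=
          {J | IsLeftIdeal R J ∧ IsRightIdeal R J ∧ J ≠ ⊥ ∧ A * J = J} with hFam
        obtain ⟨J, hJF, hJmin⟩ := dcc_minimal hartl Fam (fun J hJ => hJ.1)
          ⟨A, hAl, hAr, hAbot, hAA⟩
        obtain ⟨hJl, hJr, hJbot, hJA⟩ := hJF
        have hJleA : J ≤ A := by
          conv_lhs => rw [← hJA]
          exact mul_le'.2 fun m hm n hn => hAr n m hm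
        obtain ⟨a, haJ, hane⟩ := exists_ne_zero hJbot
        obtain ⟨x₀, hx₀A, hx₀ne⟩ := hz a (hAle (hJleA haJ)) hane
        set Ja : AddSubgroup R := AddSubgroup.map (AddMonoidHom.mulRight a) A with hJaDef
        have hmemJa : ∀ u : R, u ∈ Ja ↔ ∃ x ∈ A, x * a = u := by
          intro u
          rw [hJaDef, AddSubgroup.mem_map]
          rfl
        have hJaF : Ja ∈ Fam := by
          refine ⟨?_, ?_, ?_, ?_⟩
          · intro r u hu
            obtain ⟨x, hx, rfl⟩ := (hmemJa u).1 hu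
            exact (hmemJa _).2 ⟨r * x, hAl r x hx, mul_assoc r x a⟩
          · intro r u hu
            obtain ⟨x, hx, rfl⟩ := (hmemJa u).1 hu
            obtain ⟨r', hr'⟩ := duo_mem_right hduo a r
            refine (hmemJa _).2 ⟨x * r', hAr r' x hx, ?_⟩
            rw [mul_assoc, mul_assoc, hr']
          · intro hbot
            refine hx₀ne ?_
            have : x₀ * a ∈ Ja := (hmemJa _).2 ⟨x₀, hx₀A, rfl⟩
            rw [hbot] at this
            exact AddSubgroup.mem_bot.1 this
          · refine le_antisymm (mul_le'.2 fun y hy u hu => ?_) (fun u hu => ?_)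
            · obtain ⟨x, hx, rfl⟩ := (hmemJa u).1 hu
              exact (hmemJa _).2 ⟨y * x, hAr x y hy, mul_assoc y x a⟩
            · obtain ⟨x, hx, rfl⟩ := (hmemJa u).1 hu
              have hx' : x ∈ A * A := hAA.symm ▸ hx
              refine mul_induction_on' (C := fun t => t * a ∈ A * Ja) hx' ?_ ?_
              · intro m hm n hn
                rw [mul_assoc]
                exact mul_mem_mul' hm ((hmemJa _).2 ⟨n, hn, rfl⟩)
              · intro x y hx hy
                rw [add_mul]
                exact add_mem hx hy
        have hJaJ : Ja ≤ J := by
          intro u hu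
          obtain ⟨x, hx, rfl⟩ := (hmemJa u).1 hu
          exact hJl x a haJ
        have hJaeq : Ja = J := hJmin Ja hJaF hJaJ
        obtain ⟨e, heA, hea⟩ := (hmemJa a).1 (hJaeq ▸ haJ)
        have hpow : ∀ n, 1 ≤ n → e ^ n ≠ 0 := by
          have hpa : ∀ n : ℕ, e ^ n * a = a := by
            intro n
            induction n with
            | zero => simp
            | succ k ih => rw [pow_succ, mul_assoc, hea, ih]
          intro n hn h0
          exact hane (by rw [← hpa n, h0, zero_mul])
        obtain ⟨g, s, hgs, hgg, hgne⟩ := exists_idem_of_pow hartl hartr e hpow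
        exact ⟨g, hgs ▸ hAr s e heA, hgne, hgg⟩
      · -- no left annihilator: mirror construction
        push_neg at hw
        set Fam : Set (AddSubgroup R) :=
          {J | IsLeftIdeal R J ∧ IsRightIdeal R J ∧ J ≠ ⊥ ∧ J * A = J} with hFam
        obtain ⟨J, hJF, hJmin⟩ := dcc_minimal hartl Fam (fun J hJ => hJ.1)
          ⟨A, hAl, hAr, hAbot, hAA⟩
        obtain ⟨hJl, hJr, hJbot, hJA⟩ := hJF
        have hJleA : J ≤ A := by
          conv_lhs => rw [← hJA]
          exact mul_le'.2 fun m hm n hn => hAl m n hn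
        obtain ⟨a, haJ, hane⟩ := exists_ne_zero hJbot
        obtain ⟨x₀, hx₀A, hx₀ne⟩ := hw a (hAle (hJleA haJ)) hane
        set Ja : AddSubgroup R := AddSubgroup.map (AddMonoidHom.mulLeft a) A with hJaDef
        have hmemJa : ∀ u : R, u ∈ Ja ↔ ∃ x ∈ A, a * x = u := by
          intro u
          rw [hJaDef, AddSubgroup.mem_map]
          rfl
        have hJaF : Ja ∈ Fam := by
          refine ⟨?_, ?_, ?_, ?_⟩
          · intro r u hu
            obtain ⟨x, hx, rfl⟩ := (hmemJa u).1 hu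
            obtain ⟨r', hr'⟩ := duo_mem_left hduo a r
            refine (hmemJa _).2 ⟨r' * x, hAl r' x hx, ?_⟩
            rw [← mul_assoc, ← mul_assoc, ← hr']
          · intro r u hu
            obtain ⟨x, hx, rfl⟩ := (hmemJa u).1 hu
            exact (hmemJa _).2 ⟨x * r, hAr r x hx, (mul_assoc a x r).symm⟩
          · intro hbot
            refine hx₀ne ?_
            have : a * x₀ ∈ Ja := (hmemJa _).2 ⟨x₀, hx₀A, rfl⟩
            rw [hbot] at this
            exact AddSubgroup.mem_bot.1 this
          · refine le_antisymm (mul_le'.2 fun u hu y hy => ?_) (fun u hu => ?_)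
            · obtain ⟨x, hx, rfl⟩ := (hmemJa u).1 hu
              exact (hmemJa _).2 ⟨x * y, hAr y x hx, (mul_assoc a x y).symm⟩
            · obtain ⟨x, hx, rfl⟩ := (hmemJa u).1 hu
              have hx' : x ∈ A * A := hAA.symm ▸ hx
              refine mul_induction_on' (C := fun t => a * t ∈ Ja * A) hx' ?_ ?_
              · intro m hm n hn
                rw [← mul_assoc]
                exact mul_mem_mul' ((hmemJa _).2 ⟨m, hm, rfl⟩) hn
              · intro x y hx hy
                rw [mul_add]
                exact add_mem hx hy
        have hJaJ : Ja ≤ J := by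
          intro u hu
          obtain ⟨x, hx, rfl⟩ := (hmemJa u).1 hu
          exact hJr x a haJ
        have hJaeq : Ja = J := hJmin Ja hJaF hJaJ
        obtain ⟨e, heA, hea⟩ := (hmemJa a).1 (hJaeq ▸ haJ)
        have hpow : ∀ n, 1 ≤ n → e ^ n ≠ 0 := by
          have hpa : ∀ n : ℕ, a * e ^ n = a := by
            intro n
            induction n with
            | zero => simp
            | succ k ih => rw [pow_succ, ← mul_assoc, ih, hea]
          intro n hn h0
          exact hane (by rw [← hpa n, h0, mul_zero])
        obtain ⟨g, s, hgs, hgg, hgne⟩ := exists_idem_of_pow hartl hartr e hpow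
        exact ⟨g, hgs ▸ hAr s e heA, hgne, hgg⟩
    -- splitting by the central idempotent g
    obtain ⟨g, hgA, hgne, hgg⟩ := hG
    have hgcen : ∀ r, g * r = r * g := idem_central hduo hgg
    have hfg : f * g = g := hAlef g hgA
    have hgf : g * f = g := by rw [hgcen f, hfg]
    set f' := f - g with hf'
    have hff' : f * f' = f' := by rw [hf', mul_sub, hfi, hfg]
    have hf'f : f' * f = f' := by rw [hf', sub_mul, hfi, hgf]
    have hf'g : f' * g = 0 := by rw [hf', sub_mul, hfg, hgg, sub_self]
    have hgf' : g * f' = 0 := by rw [hf', mul_sub, hgf, hgg, sub_self]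
    have hf'i : f' * f' = f' := by
      rw [show f' * f' = f' * f - f' * g by rw [hf', mul_sub], hf'f, hf'g, sub_zero]
    have hf'c : ∀ r, f' * r = r * f' := by
      intro r
      rw [hf', sub_mul, mul_sub, hfc r, hgcen r]
    set A' : AddSubgroup R := AddSubgroup.map (AddMonoidHom.mulLeft f') A with hA'Def
    have hmemA' : ∀ u : R, u ∈ A' ↔ ∃ x ∈ A, f' * x = u := by
      intro u
      rw [hA'Def, AddSubgroup.mem_map]
      rfl
    have hA'leA : A' ≤ A := by
      intro u hu
      obtain ⟨x, hx, rfl⟩ := (hmemA' u).1 hu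
      have : f' * x = x - g * x := by rw [hf', sub_mul, hAlef x hx]
      rw [this]
      exact sub_mem hx (hAl g x hx)
    have hA'l : IsLeftIdeal R A' := by
      intro r u hu
      obtain ⟨x, hx, rfl⟩ := (hmemA' u).1 hu
      refine (hmemA' _).2 ⟨r * x, hAl r x hx, ?_⟩
      rw [← mul_assoc, hf'c r, mul_assoc]
    have hA'r : IsRightIdeal R A' := by
      intro r u hu
      obtain ⟨x, hx, rfl⟩ := (hmemA' u).1 hu
      exact (hmemA' _).2 ⟨x * r, hAr r x hx, (mul_assoc f' x r).symm⟩
    have hA'cor : A' ≤ corner f' := by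
      intro u hu
      obtain ⟨x, hx, rfl⟩ := (hmemA' u).1 hu
      show f' * (f' * x) = f' * x
      rw [← mul_assoc, hf'i]
    have hgA' : g ∉ A' := by
      intro hmem
      obtain ⟨x, hx, hgx⟩ := (hmemA' g).1 hmem
      refine hgne ?_
      calc g = g * g := hgg.symm
      _ = g * (f' * x) := by rw [hgx]
      _ = (g * f') * x := (mul_assoc _ _ _).symm
      _ = 0 := by rw [hgf', zero_mul]
    have hA'lt : A' < A := lt_of_le_of_ne hA'leA (fun h => hgA' (h ▸ hgA))
    by_cases hA'bot : A' = ⊥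
    · have hann : ∀ a ∈ A, f' * a = 0 := by
        intro a ha
        have h := (hmemA' (f' * a)).2 ⟨a, ha, rfl⟩
        rw [hA'bot] at h
        exact AddSubgroup.mem_bot.1 h
      have hf'ne : f' ≠ 0 := by
        intro h0
        have hfeq : f = g := by rwa [hf', sub_eq_zero] at h0
        have hfA : f ∈ A := hfeq ▸ hgA
        refine hAcor (le_antisymm hAle fun y hy => ?_)
        rw [← show f * y = y from hy]
        exact hAr y f hfA
      exact hnc ⟨⟨f', hff', hf'ne, fun a ha => by rw [← hf'c a, hann a ha]⟩,
        ⟨f', hff', hf'ne, hann⟩⟩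
    by_cases hA'corn : A' = corner f'
    · have hf'A : f' ∈ A := hA'leA (hA'corn ▸ (show f' ∈ corner f' from hf'i))
      have hfA : f ∈ A := by
        have hfe : f = g + f' := by rw [hf', add_sub_cancel]
        rw [hfe]
        exact add_mem hgA hf'A
      refine hAcor (le_antisymm hAle fun y hy => ?_)
      rw [← show f * y = y from hy]
      exact hAr y f hfA
    · obtain ⟨⟨z', hz'c, hz'ne, hz'⟩, ⟨w', hw'c, hw'ne, hw'⟩⟩ :=
        hgood A' f' hf'i hf'c hA'l hA'r hA'bot hA'corn hA'cor hA'lt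
    -- note : hz'c : f' * z' = z'
      have hdecomp : ∀ a ∈ A, a = g * a + f' * a := by
        intro a ha
        calc a = f * a := (hAlef a ha).symm
        _ = (g + f') * a := by rw [hf', add_sub_cancel]
        _ = g * a + f' * a := add_mul g f' a
      have hgz' : g * z' = 0 := by
        rw [← show f' * z' = z' from hz'c, ← mul_assoc, hgf', zero_mul]
      have hw'g : w' * g = 0 := by
        rw [← hgcen w', ← show f' * w' = w' from hw'c, ← mul_assoc, hgf', zero_mul]
      refine hnc ⟨⟨z', ?_, hz'ne, fun a ha => ?_⟩, ⟨w', ?_, hw'ne, fun a ha => ?_⟩⟩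
      · show f * z' = z'
        rw [← show f' * z' = z' from hz'c, ← mul_assoc, hff']
      · calc a * z' = (g * a + f' * a) * z' := by rw [← hdecomp a ha]
        _ = (g * a) * z' + (f' * a) * z' := add_mul _ _ _
        _ = 0 := by
            rw [hz' _ ((hmemA' _).2 ⟨a, ha, rfl⟩), hgcen a, mul_assoc, hgz', mul_zero,
              zero_add]
      · show f * w' = w'
        rw [← show f' * w' = w' from hw'c, ← mul_assoc, hff']
      · calc w' * a = w' * (g * a + f' * a) := by rw [← hdecomp a ha]
        _ = w' * (g * a) + w' * (f' * a) := mul_add _ _ _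
        _ = 0 := by
            rw [hw' _ ((hmemA' _).2 ⟨a, ha, rfl⟩), ← mul_assoc, hw'g, zero_mul,
              zero_add]

end Main

section Super

variable (hartl : DCCOn R {I | IsLeftIdeal R I}) (hartr : DCCOn R {I | IsRightIdeal R I})
variable (hduo : ∀ I : AddSubgroup R, IsOneSidedIdeal R I → IsLeftIdeal R I ∧ IsRightIdeal R I)

lemma rAnn_leftIdeal {A : AddSubgroup R} (hAr : IsRightIdeal R A) :
    IsLeftIdeal R (rAnn A) := fun r x hx a ha => by
  rw [← mul_assoc]
  exact hx (a * r) (hAr r a ha)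

lemma rAnn_rightIdeal {A : AddSubgroup R} : IsRightIdeal R (rAnn A) := fun r x hx a ha => by
  rw [← mul_assoc, hx a ha, zero_mul]

lemma lAnn_rightIdeal {A : AddSubgroup R} (hAl : IsLeftIdeal R A) :
    IsRightIdeal R (lAnn A) := fun r x hx a ha => by
  rw [mul_assoc]
  exact hx (r * a) (hAl r a ha)

lemma lAnn_leftIdeal {A : AddSubgroup R} : IsLeftIdeal R (lAnn A) := fun r x hx a ha => by
  rw [mul_assoc, hx a ha, mul_zero]

lemma mul_rAnn_eq_bot (A : AddSubgroup R) : A * rAnn A = ⊥ :=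
  le_bot_iff.1 (mul_le'.2 fun m hm n hn => by
    rw [AddSubgroup.mem_bot]
    exact hn m hm)

lemma lAnn_mul_eq_bot (A : AddSubgroup R) : lAnn A * A = ⊥ :=
  le_bot_iff.1 (mul_le'.2 fun m hm n hn => by
    rw [AddSubgroup.mem_bot]
    exact hm n hn)

lemma rAnn_ne_top {A : AddSubgroup R} (hbot : A ≠ ⊥) : rAnn A ≠ ⊤ := by
  intro h
  refine hbot (le_bot_iff.1 fun a ha => ?_)
  have h1 : (1 : R) ∈ rAnn A := h ▸ AddSubgroup.mem_top 1
  rw [AddSubgroup.mem_bot]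
  have h2 := h1 a ha
  rwa [mul_one] at h2

lemma lAnn_ne_top {A : AddSubgroup R} (hbot : A ≠ ⊥) : lAnn A ≠ ⊤ := by
  intro h
  refine hbot (le_bot_iff.1 fun a ha => ?_)
  have h1 : (1 : R) ∈ lAnn A := h ▸ AddSubgroup.mem_top 1
  rw [AddSubgroup.mem_bot]
  have h2 := h1 a ha
  rwa [one_mul] at h2

include hartl hartr hduo in
lemma main_top {A : AddSubgroup R} (hAl : IsLeftIdeal R A) (hAr : IsRightIdeal R A)
    (hbot : A ≠ ⊥) (htop : A ≠ ⊤) : rAnn A ≠ ⊥ ∧ lAnn A ≠ ⊥ := by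
  have h := main_ann hartl hartr hduo A 1 (one_mul 1) (fun r => by rw [one_mul, mul_one])
    hAl hAr hbot (by rwa [corner_one]) (by rw [corner_one]; exact le_top)
  obtain ⟨⟨z, -, hzne, hz⟩, ⟨w, -, hwne, hw⟩⟩ := h
  constructor
  · intro hb
    refine hzne ?_
    have hzr : z ∈ rAnn A := hz
    rw [hb] at hzr
    exact AddSubgroup.mem_bot.1 hzr
  · intro hb
    refine hwne ?_
    have hwr : w ∈ lAnn A := hw
    rw [hb] at hwr
    exact AddSubgroup.mem_bot.1 hwr

include hduo in
lemma ipo_ideal {A : AddSubgroup R} (hA : A ∈ IPO R) :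
    IsLeftIdeal R A ∧ IsRightIdeal R A := by
  obtain ⟨I, J, hI, hJ, rfl⟩ := hA
  exact ⟨leftIdeal_mul (hduo I hI).1, rightIdeal_mul (hduo J hJ).2⟩

lemma mem_ipo_of_ideal {A : AddSubgroup R} (hAl : IsLeftIdeal R A) (hAr : IsRightIdeal R A) :
    A ∈ IPO R := by
  refine ⟨A, ⊤, Or.inl hAl, Or.inl (fun r x _ => AddSubgroup.mem_top _), ?_⟩
  refine le_antisymm (fun a ha => ?_) (mul_le'.2 fun m hm n hn => hAr n m hm)
  rw [← mul_one a]
  exact mul_mem_mul' ha (AddSubgroup.mem_top 1)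

lemma top_not_vertex : ¬ APOGVertex R (⊤ : AddSubgroup R) := by
  rintro ⟨-, -, B, hB, hBne, hB0 | hB0⟩
  · refine hBne (le_bot_iff.1 fun b hb => ?_)
    have h := mul_mem_mul' (AddSubgroup.mem_top (1 : R)) hb
    rw [hB0] at h
    rwa [one_mul] at h
  · refine hBne (le_bot_iff.1 fun b hb => ?_)
    have h := mul_mem_mul' hb (AddSubgroup.mem_top (1 : R))
    rw [hB0] at h
    rwa [mul_one] at h

include hartl hartr hduo in
lemma vertex_iff' {A : AddSubgroup R} :
    APOGVertex R A ↔ A ∈ IPO R ∧ A ≠ ⊥ ∧ A ≠ ⊤ := by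
  constructor
  · intro hv
    refine ⟨hv.1, hv.2.1, ?_⟩
    rintro rfl
    exact top_not_vertex hv
  · rintro ⟨hipo, hbot, htop⟩
    obtain ⟨hAl, hAr⟩ := ipo_ideal hduo hipo
    obtain ⟨hr, hl⟩ := main_top hartl hartr hduo hAl hAr hbot htop
    exact ⟨hipo, hbot, rAnn A,
      mem_ipo_of_ideal (rAnn_leftIdeal hAr) rAnn_rightIdeal, hr,
      Or.inl (mul_rAnn_eq_bot A)⟩

include hartl hartr hduo in
lemma aright_eq :
    ArightIPO R = IPO R \ {(⊥ : AddSubgroup R), (⊤ : AddSubgroup R)} := by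
  ext A
  simp only [ArightIPO, Set.mem_setOf_eq, Set.mem_diff, Set.mem_insert_iff,
    Set.mem_singleton_iff, not_or]
  constructor
  · rintro ⟨hv, -⟩
    have h := (vertex_iff' hartl hartr hduo).1 hv
    exact ⟨h.1, h.2.1, h.2.2⟩
  · rintro ⟨hipo, hbot, htop⟩
    obtain ⟨hAl, hAr⟩ := ipo_ideal hduo hipo
    have hv : APOGVertex R A := (vertex_iff' hartl hartr hduo).2 ⟨hipo, hbot, htop⟩
    have hr := (main_top hartl hartr hduo hAl hAr hbot htop).1
    refine ⟨hv, rAnn A, ?_, mul_rAnn_eq_bot A⟩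
    exact (vertex_iff' hartl hartr hduo).2
      ⟨mem_ipo_of_ideal (rAnn_leftIdeal hAr) rAnn_rightIdeal, hr, rAnn_ne_top hbot⟩

include hartl hartr hduo in
lemma aleft_eq :
    AleftIPO R = IPO R \ {(⊥ : AddSubgroup R), (⊤ : AddSubgroup R)} := by
  ext A
  simp only [AleftIPO, Set.mem_setOf_eq, Set.mem_diff, Set.mem_insert_iff,
    Set.mem_singleton_iff, not_or]
  constructor
  · rintro ⟨hv, -⟩
    have h := (vertex_iff' hartl hartr hduo).1 hv
    exact ⟨h.1, h.2.1, h.2.2⟩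
  · rintro ⟨hipo, hbot, htop⟩
    obtain ⟨hAl, hAr⟩ := ipo_ideal hduo hipo
    have hv : APOGVertex R A := (vertex_iff' hartl hartr hduo).2 ⟨hipo, hbot, htop⟩
    have hl := (main_top hartl hartr hduo hAl hAr hbot htop).2
    refine ⟨hv, lAnn A, ?_, lAnn_mul_eq_bot A⟩
    exact (vertex_iff' hartl hartr hduo).2
      ⟨mem_ipo_of_ideal lAnn_leftIdeal (lAnn_rightIdeal hAl), hl, lAnn_ne_top hbot⟩

include hartl hartr hduo in
lemma mk_edge {A B : AddSubgroup R} (hA : A ∈ IPO R ∧ A ≠ ⊥ ∧ A ≠ ⊤)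
    (hB : B ∈ IPO R ∧ B ≠ ⊥ ∧ B ≠ ⊤) (hne : A ≠ B) (hAB : A * B = ⊥) : APOGEdge R A B :=
  ⟨(vertex_iff' hartl hartr hduo).2 hA, (vertex_iff' hartl hartr hduo).2 hB, hne, hAB⟩

include hartl hartr hduo in
lemma path3 : ∀ A B : AddSubgroup R, APOGVertex R A → APOGVertex R B → A ≠ B →
    APOGPathLe3 R A B := by
  intro A B hvA hvB hne
  obtain ⟨hipoA, hbotA, htopA⟩ := (vertex_iff' hartl hartr hduo).1 hvA
  obtain ⟨hipoB, hbotB, htopB⟩ := (vertex_iff' hartl hartr hduo).1 hvB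
  have hAtrip : A ∈ IPO R ∧ A ≠ ⊥ ∧ A ≠ ⊤ := ⟨hipoA, hbotA, htopA⟩
  have hBtrip : B ∈ IPO R ∧ B ≠ ⊥ ∧ B ≠ ⊤ := ⟨hipoB, hbotB, htopB⟩
  obtain ⟨hAl, hAr⟩ := ipo_ideal hduo hipoA
  obtain ⟨hBl, hBr⟩ := ipo_ideal hduo hipoB
  by_cases hAB : A * B = ⊥
  · exact Or.inl (mk_edge hartl hartr hduo hAtrip hBtrip hne hAB)
  have hXne : rAnn A ≠ ⊥ := (main_top hartl hartr hduo hAl hAr hbotA htopA).1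
  have hYne : lAnn B ≠ ⊥ := (main_top hartl hartr hduo hBl hBr hbotB htopB).2
  have hXtop : rAnn A ≠ ⊤ := rAnn_ne_top hbotA
  have hYtop : lAnn B ≠ ⊤ := lAnn_ne_top hbotB
  have hXtrip : rAnn A ∈ IPO R ∧ rAnn A ≠ ⊥ ∧ rAnn A ≠ ⊤ :=
    ⟨mem_ipo_of_ideal (rAnn_leftIdeal hAr) rAnn_rightIdeal, hXne, hXtop⟩
  have hYtrip : lAnn B ∈ IPO R ∧ lAnn B ≠ ⊥ ∧ lAnn B ≠ ⊤ :=
    ⟨mem_ipo_of_ideal lAnn_leftIdeal (lAnn_rightIdeal hBl), hYne, hYtop⟩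
  have hAX : A * rAnn A = ⊥ := mul_rAnn_eq_bot A
  have hYB : lAnn B * B = ⊥ := lAnn_mul_eq_bot B
  have hXB : rAnn A ≠ B := fun h => hAB (h ▸ hAX)
  have hYA : lAnn B ≠ A := fun h => hAB (h ▸ hYB)
  by_cases hXY : rAnn A ⊓ lAnn B = ⊥
  · have hXYmul : rAnn A * lAnn B = ⊥ := by
      refine le_bot_iff.1 ?_
      rw [← hXY]
      exact le_inf (mul_le'.2 fun m hm n hn => rAnn_rightIdeal n m hm)
        (mul_le'.2 fun m hm n hn => lAnn_leftIdeal m n hn)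
    have hXYne : rAnn A ≠ lAnn B := fun h => hXne (by rw [← hXY, h]; exact (inf_idem _).symm)
    by_cases hAX' : A = rAnn A
    · have hAY : A * lAnn B = ⊥ := by rw [hAX']; exact hXYmul
      have hYB' : lAnn B ≠ B := fun h => hAB (h ▸ hAY)
      exact Or.inr (Or.inl ⟨lAnn B,
        mk_edge hartl hartr hduo hAtrip hYtrip (fun h => hYA h.symm) hAY,
        mk_edge hartl hartr hduo hYtrip hBtrip hYB' hYB⟩)
    · by_cases hBY' : B = lAnn B
      · have hXB2 : rAnn A * B = ⊥ := by rw [hBY']; exact hXYmul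
        exact Or.inr (Or.inl ⟨rAnn A,
          mk_edge hartl hartr hduo hAtrip hXtrip hAX' hAX,
          mk_edge hartl hartr hduo hXtrip hBtrip hXB hXB2⟩)
      · exact Or.inr (Or.inr ⟨rAnn A, lAnn B,
          mk_edge hartl hartr hduo hAtrip hXtrip hAX' hAX,
          mk_edge hartl hartr hduo hXtrip hYtrip hXYne hXYmul,
          mk_edge hartl hartr hduo hYtrip hBtrip (fun h => hBY' h.symm) hYB⟩)
  · have hCl : IsLeftIdeal R (rAnn A ⊓ lAnn B) :=
      fun r x hx => ⟨rAnn_leftIdeal hAr r x hx.1, lAnn_leftIdeal r x hx.2⟩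
    have hCr : IsRightIdeal R (rAnn A ⊓ lAnn B) :=
      fun r x hx => ⟨rAnn_rightIdeal r x hx.1, lAnn_rightIdeal hBl r x hx.2⟩
    have hAC : A * (rAnn A ⊓ lAnn B) = ⊥ := le_bot_iff.1 (mul_le'.2 fun m hm n hn => by
      rw [AddSubgroup.mem_bot]
      exact hn.1 m hm)
    have hCB : (rAnn A ⊓ lAnn B) * B = ⊥ := le_bot_iff.1 (mul_le'.2 fun m hm n hn => by
      rw [AddSubgroup.mem_bot]
      exact hm.2 n hn)
    have hCtop : rAnn A ⊓ lAnn B ≠ ⊤ := fun h => hXtop (top_le_iff.1 (h ▸ inf_le_left))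
    have hCA : rAnn A ⊓ lAnn B ≠ A := fun h => hAB (h ▸ hCB)
    have hCB' : rAnn A ⊓ lAnn B ≠ B := fun h => hAB (h ▸ hAC)
    have hCtrip : (rAnn A ⊓ lAnn B) ∈ IPO R ∧ rAnn A ⊓ lAnn B ≠ ⊥ ∧ rAnn A ⊓ lAnn B ≠ ⊤ :=
      ⟨mem_ipo_of_ideal hCl hCr, hXY, hCtop⟩
    exact Or.inr (Or.inl ⟨rAnn A ⊓ lAnn B,
      mk_edge hartl hartr hduo hAtrip hCtrip (fun h => hCA h.symm) hAC,
      mk_edge hartl hartr hduo hCtrip hBtrip hCB' hCB⟩)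

end Super

end APOGAux

/-- If `R` is a left and right Artinian Duo ring, then
`A^l(IPO(R)) = A^r(IPO(R)) = IPO(R) \ {0, R}`; consequently `APOG(R)` is connected and
any two distinct vertices are joined by a directed path of length at most `3`. -/
theorem APOG_of_artinian_duo (R : Type*) [Ring R]
    (hartl : DCCOn R {I | IsLeftIdeal R I}) (hartr : DCCOn R {I | IsRightIdeal R I})
    (hduo : ∀ I : AddSubgroup R, IsOneSidedIdeal R I → IsLeftIdeal R I ∧ IsRightIdeal R I) :
    AleftIPO R = ArightIPO R ∧
    ArightIPO R = IPO R \ {(⊥ : AddSubgroup R), (⊤ : AddSubgroup R)} ∧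
    APOGConnected R ∧
    (∀ A B : AddSubgroup R, APOGVertex R A → APOGVertex R B → A ≠ B →
      APOGPathLe3 R A B) := by
  have hpath := APOGAux.path3 hartl hartr hduo
  have haright := APOGAux.aright_eq hartl hartr hduo
  have haleft := APOGAux.aleft_eq hartl hartr hduo
  refine ⟨haleft.trans haright.symm, haright, ?_, hpath⟩
  intro A B hA hB hne
  rcases hpath A B hA hB hne with e | ⟨C, e1, e2⟩ | ⟨C, D, e1, e2, e3⟩
  · exact Relation.TransGen.single e
  · exact Relation.TransGen.tail (Relation.TransGen.single e1) e2
  · exact Relation.TransGen.tail (Relation.TransGen.tail (Relation.TransGen.single e1) e2) e3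
end

section
/- Let R be a ring with identity such that APOG(R) ≠ ∅, and let I be a left or right ideal of R that is a vertex of APOG(R). Then R is a left and right Artinian ring if and only if adu(I) satisfies the descending chain condition both on its elements that are left ideals of R and on its elements that are right ideals of R. -/
open scoped Pointwise

/-- `A ⇌ B`: `A ≠ B` and `A*B = 0` or `B*A = 0`. -/
def APOGAdj (R : Type*) [Ring R] (A B : AddSubgroup R) : Prop :=
  A ≠ B ∧ (A * B = ⊥ ∨ B * A = ⊥)

/-- `ad(C)`: the vertices `A` with `A = C`, or `C ⇌ A`, or `C ⇌ B ⇌ A` for some vertex `B`. -/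
def ad (R : Type*) [Ring R] (C : AddSubgroup R) : Set (AddSubgroup R) :=
  {A | APOGVertex R A ∧ (A = C ∨ APOGAdj R C A ∨
    ∃ B, APOGVertex R B ∧ APOGAdj R C B ∧ APOGAdj R B A)}

/-- `adu(D) = ⋃ { ad(C) : C a vertex of APOG(R) with C ⊆ D }`. -/
def adu (R : Type*) [Ring R] (D : AddSubgroup R) : Set (AddSubgroup R) :=
  {A | ∃ C : AddSubgroup R, APOGVertex R C ∧ C ≤ D ∧ A ∈ ad R C}

/-- A family `T` of additive subgroups satisfies the ascending chain condition. -/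
def ACCOn (R : Type*) [Ring R] (T : Set (AddSubgroup R)) : Prop :=
  ∀ f : ℕ → AddSubgroup R, (∀ n, f n ∈ T) → (∀ n, f n ≤ f (n + 1)) →
    ∃ N, ∀ n, N ≤ n → f n = f N

namespace ApogAux

variable {R : Type*} [Ring R]

/-! ### Generalities on products of additive subgroups -/

theorem mul_mem_mul' {M N : AddSubgroup R} {m n : R} (hm : m ∈ M) (hn : n ∈ N) :
    m * n ∈ M * N :=
  AddSubmonoid.mul_mem_mul hm hn

theorem mul_le' {M N P : AddSubgroup R} : M * N ≤ P ↔ ∀ m ∈ M, ∀ n ∈ N, m * n ∈ P := by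
  constructor
  · intro h m hm n hn
    exact h (mul_mem_mul' hm hn)
  · intro h x hx
    exact AddSubmonoid.mul_induction_on hx (fun m hm n hn => h m hm n hn)
      (fun a b ha hb => P.add_mem ha hb)

theorem mul_eq_bot' {M N : AddSubgroup R} (h : ∀ m ∈ M, ∀ n ∈ N, m * n = 0) : M * N = ⊥ :=
  eq_bot_iff.2 (mul_le'.2 fun m hm n hn => by
    rw [AddSubgroup.mem_bot]; exact h m hm n hn)

theorem pair_zero {M N : AddSubgroup R} (h : M * N = ⊥) {m n : R} (hm : m ∈ M) (hn : n ∈ N) :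
    m * n = 0 := by
  have := mul_mem_mul' hm hn
  rw [h, AddSubgroup.mem_bot] at this
  exact this

theorem exists_ne_zero {A : AddSubgroup R} (h : A ≠ ⊥) : ∃ x ∈ A, x ≠ 0 := by
  by_contra hc
  push_neg at hc
  exact h ((AddSubgroup.eq_bot_iff_forall A).2 hc)

/-! ### IPO membership -/

theorem top_onesided : IsOneSidedIdeal R (⊤ : AddSubgroup R) :=
  Or.inl fun _ x _ => AddSubgroup.mem_top _

theorem left_IPO {J : AddSubgroup R} (h : IsLeftIdeal R J) : J ∈ IPO R := by
  refine ⟨⊤, J, top_onesided, Or.inl h, ?_⟩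
  refine (le_antisymm (mul_le'.2 fun r _ x hx => h r x hx) fun x hx => ?_).symm
  have := mul_mem_mul' (AddSubgroup.mem_top (1 : R)) hx
  rwa [one_mul] at this

theorem right_IPO {J : AddSubgroup R} (h : IsRightIdeal R J) : J ∈ IPO R := by
  refine ⟨J, ⊤, Or.inr h, top_onesided, ?_⟩
  refine (le_antisymm (mul_le'.2 fun x hx r _ => h r x hx) fun x hx => ?_).symm
  have := mul_mem_mul' hx (AddSubgroup.mem_top (1 : R))
  rwa [mul_one] at this

/-! ### Annihilators and multiples of an element -/

/-- the left annihilator `{x | x * b = 0}` of `b`, a left ideal. -/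
def lann (b : R) : AddSubgroup R where
  carrier := {x : R | x * b = 0}
  zero_mem' := zero_mul b
  add_mem' := fun {x y} hx hy => by
    have hx' : x * b = 0 := hx
    have hy' : y * b = 0 := hy
    show (x + y) * b = 0
    rw [add_mul, hx', hy', add_zero]
  neg_mem' := fun {x} hx => by
    have hx' : x * b = 0 := hx
    show (-x) * b = 0
    rw [neg_mul, hx', neg_zero]

theorem mem_lann {b x : R} : x ∈ lann b ↔ x * b = 0 := Iff.rfl

theorem lann_left (b : R) : IsLeftIdeal R (lann b) := by
  intro r x hx
  have hx' : x * b = 0 := hx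
  show (r * x) * b = 0
  rw [mul_assoc, hx', mul_zero]

/-- the right annihilator `{x | b * x = 0}` of `b`, a right ideal. -/
def rann (b : R) : AddSubgroup R where
  carrier := {x : R | b * x = 0}
  zero_mem' := mul_zero b
  add_mem' := fun {x y} hx hy => by
    have hx' : b * x = 0 := hx
    have hy' : b * y = 0 := hy
    show b * (x + y) = 0
    rw [mul_add, hx', hy', add_zero]
  neg_mem' := fun {x} hx => by
    have hx' : b * x = 0 := hx
    show b * (-x) = 0
    rw [mul_neg, hx', neg_zero]

theorem mem_rann {b x : R} : x ∈ rann b ↔ b * x = 0 := Iff.rfl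

theorem rann_right (b : R) : IsRightIdeal R (rann b) := by
  intro r x hx
  have hx' : b * x = 0 := hx
  show b * (x * r) = 0
  rw [← mul_assoc, hx', zero_mul]

/-- `R·b = {x * b | x}`, a left ideal. -/
def rMul (b : R) : AddSubgroup R :=
  AddSubgroup.map (AddMonoidHom.mulRight b) ⊤

theorem mem_rMul {b x : R} : x ∈ rMul b ↔ ∃ r : R, r * b = x := by
  constructor
  · rintro ⟨r, -, rfl⟩
    exact ⟨r, rfl⟩
  · rintro ⟨r, rfl⟩
    exact ⟨r, AddSubgroup.mem_top r, rfl⟩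

theorem rMul_left (b : R) : IsLeftIdeal R (rMul b) := by
  intro r x hx
  obtain ⟨s, rfl⟩ := mem_rMul.1 hx
  exact mem_rMul.2 ⟨r * s, mul_assoc r s b⟩

theorem self_mem_rMul (b : R) : b ∈ rMul b := mem_rMul.2 ⟨1, one_mul b⟩

theorem rMul_ne_bot {b : R} (hb : b ≠ 0) : rMul b ≠ ⊥ := by
  intro h
  apply hb
  have := self_mem_rMul b
  rwa [h, AddSubgroup.mem_bot] at this

/-- `b·R = {b * x | x}`, a right ideal. -/
def lMul (b : R) : AddSubgroup R :=
  AddSubgroup.map (AddMonoidHom.mulLeft b) ⊤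

theorem mem_lMul {b x : R} : x ∈ lMul b ↔ ∃ r : R, b * r = x := by
  constructor
  · rintro ⟨r, -, rfl⟩
    exact ⟨r, rfl⟩
  · rintro ⟨r, rfl⟩
    exact ⟨r, AddSubgroup.mem_top r, rfl⟩

theorem lMul_right (b : R) : IsRightIdeal R (lMul b) := by
  intro r x hx
  obtain ⟨s, rfl⟩ := mem_lMul.1 hx
  exact mem_lMul.2 ⟨s * r, (mul_assoc b s r).symm⟩

theorem self_mem_lMul (b : R) : b ∈ lMul b := mem_lMul.2 ⟨1, mul_one b⟩

theorem lMul_ne_bot {b : R} (hb : b ≠ 0) : lMul b ≠ ⊥ := by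
  intro h
  apply hb
  have := self_mem_lMul b
  rwa [h, AddSubgroup.mem_bot] at this

theorem inf_lann_left {J : AddSubgroup R} (hJ : IsLeftIdeal R J) (b : R) :
    IsLeftIdeal R (J ⊓ lann b) := fun r x hx =>
  ⟨hJ r x ((AddSubgroup.mem_inf).1 hx).1, lann_left b r x ((AddSubgroup.mem_inf).1 hx).2⟩

theorem inf_rann_right {J : AddSubgroup R} (hJ : IsRightIdeal R J) (b : R) :
    IsRightIdeal R (J ⊓ rann b) := fun r x hx =>
  ⟨hJ r x ((AddSubgroup.mem_inf).1 hx).1, rann_right b r x ((AddSubgroup.mem_inf).1 hx).2⟩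

theorem map_mulRight_left {J : AddSubgroup R} (hJ : IsLeftIdeal R J) (b : R) :
    IsLeftIdeal R (J.map (AddMonoidHom.mulRight b)) := by
  intro r x hx
  obtain ⟨j, hj, rfl⟩ := AddSubgroup.mem_map.1 hx
  refine AddSubgroup.mem_map.2 ⟨r * j, hJ r j hj, ?_⟩
  show (r * j) * b = r * (j * b)
  exact mul_assoc r j b

theorem map_mulLeft_right {J : AddSubgroup R} (hJ : IsRightIdeal R J) (b : R) :
    IsRightIdeal R (J.map (AddMonoidHom.mulLeft b)) := by
  intro r x hx
  obtain ⟨j, hj, rfl⟩ := AddSubgroup.mem_map.1 hx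
  refine AddSubgroup.mem_map.2 ⟨j * r, hJ r j hj, ?_⟩
  show b * (j * r) = (b * j) * r
  exact (mul_assoc b j r).symm

/-! ### Vertices, `ad` and `adu` -/

theorem mem_ad_self {C : AddSubgroup R} (hC : APOGVertex R C) : C ∈ ad R C :=
  ⟨hC, Or.inl rfl⟩

theorem mem_ad_one {A C : AddSubgroup R} (hA : APOGVertex R A)
    (h : C * A = ⊥ ∨ A * C = ⊥) : A ∈ ad R C := by
  by_cases hAC : A = C
  · exact ⟨hA, Or.inl hAC⟩
  · exact ⟨hA, Or.inr (Or.inl ⟨fun hc => hAC hc.symm, h⟩)⟩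

theorem mem_ad_two {A B C : AddSubgroup R} (hA : APOGVertex R A) (hB : APOGVertex R B)
    (h1 : C * B = ⊥ ∨ B * C = ⊥) (h2 : B * A = ⊥ ∨ A * B = ⊥) : A ∈ ad R C := by
  by_cases hAC : A = C
  · exact ⟨hA, Or.inl hAC⟩
  by_cases hCB : C = B
  · refine mem_ad_one hA ?_
    rw [hCB]
    exact h2
  by_cases hBA : B = A
  · refine mem_ad_one hA ?_
    rw [← hBA]
    exact h1
  · exact ⟨hA, Or.inr (Or.inr ⟨B, hB, ⟨hCB, h1⟩, ⟨hBA, h2⟩⟩)⟩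

theorem adu_dist1 {I A : AddSubgroup R} (hIv : APOGVertex R I) (hipoA : A ∈ IPO R)
    (hAne : A ≠ ⊥) (h : I * A = ⊥ ∨ A * I = ⊥) : A ∈ adu R I := by
  have hA : APOGVertex R A := ⟨hipoA, hAne, I, hIv.1, hIv.2.1, h.symm⟩
  exact ⟨I, hIv, le_rfl, mem_ad_one hA h⟩

theorem adu_dist2 {I C X K : AddSubgroup R} (hIv : APOGVertex R I) (hCI : C ≤ I)
    (hC : C ∈ IPO R) (hCne : C ≠ ⊥) (hX : X ∈ IPO R) (hXne : X ≠ ⊥)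
    (hK : K ∈ IPO R) (hKne : K ≠ ⊥)
    (h1 : C * X = ⊥ ∨ X * C = ⊥) (h2 : K * X = ⊥ ∨ X * K = ⊥) : K ∈ adu R I := by
  have vC : APOGVertex R C := ⟨hC, hCne, X, hX, hXne, h1⟩
  have vX : APOGVertex R X := ⟨hX, hXne, C, hC, hCne, h1.symm⟩
  have vK : APOGVertex R K := ⟨hK, hKne, X, hX, hXne, h2⟩
  exact ⟨C, vC, hCI, mem_ad_two vK vX h1 h2.symm⟩

theorem mem_adu_self {I A : AddSubgroup R} (hA : APOGVertex R A) (hAI : A ≤ I) :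
    A ∈ adu R I := ⟨A, hA, hAI, mem_ad_self hA⟩

/-! ### Stabilization of chains -/

theorem stab {T : Set (AddSubgroup R)} (hT : DCCOn R T) (f : ℕ → AddSubgroup R)
    (hdesc : ∀ n, f (n + 1) ≤ f n) (hmem : ∀ n, f n ≠ ⊥ → f n ∈ T) :
    ∃ N, ∀ n, N ≤ n → f n = f N := by
  by_cases hb : ∀ n, f n ≠ ⊥
  · exact hT f (fun n => hmem n (hb n)) hdesc
  · push_neg at hb
    obtain ⟨n₀, h0⟩ := hb
    refine ⟨n₀, fun n hn => ?_⟩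
    have h1 : f n ≤ f n₀ := antitone_nat_of_succ_le hdesc hn
    rw [h0] at h1 ⊢
    exact le_bot_iff.mp h1

/-! ### The exchange lemmas -/

theorem exchangeL (b : R) (J J' : AddSubgroup R) (hle : J' ≤ J)
    (hg : J.map (AddMonoidHom.mulRight b) = J'.map (AddMonoidHom.mulRight b))
    (hk : J ⊓ lann b = J' ⊓ lann b) : J = J' := by
  refine le_antisymm (fun x hx => ?_) hle
  have hxb : x * b ∈ J'.map (AddMonoidHom.mulRight b) := by
    rw [← hg]
    exact AddSubgroup.mem_map.2 ⟨x, hx, AddMonoidHom.mulRight_apply x b⟩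
  obtain ⟨y, hy, hyx⟩ := AddSubgroup.mem_map.1 hxb
  rw [AddMonoidHom.mulRight_apply] at hyx
  have hxy : x - y ∈ J ⊓ lann b := by
    refine ⟨J.sub_mem hx (hle hy), ?_⟩
    show (x - y) * b = 0
    rw [sub_mul, hyx, sub_self]
  rw [hk] at hxy
  have hx' : x = y + (x - y) := by abel
  rw [hx']
  exact J'.add_mem hy hxy.1

theorem exchangeR (b : R) (J J' : AddSubgroup R) (hle : J' ≤ J)
    (hg : J.map (AddMonoidHom.mulLeft b) = J'.map (AddMonoidHom.mulLeft b))
    (hk : J ⊓ rann b = J' ⊓ rann b) : J = J' := by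
  refine le_antisymm (fun x hx => ?_) hle
  have hxb : b * x ∈ J'.map (AddMonoidHom.mulLeft b) := by
    rw [← hg]
    exact AddSubgroup.mem_map.2 ⟨x, hx, rfl⟩
  obtain ⟨y, hy, hyx⟩ := AddSubgroup.mem_map.1 hxb
  have hyx' : b * y = b * x := hyx
  have hxy : x - y ∈ J ⊓ rann b := by
    refine ⟨J.sub_mem hx (hle hy), ?_⟩
    show b * (x - y) = 0
    rw [mul_sub, hyx', sub_self]
  rw [hk] at hxy
  have hx' : x = y + (x - y) := by abel
  rw [hx']
  exact J'.add_mem hy hxy.1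

/-! ### The master lemmas -/

theorem masterL (I : AddSubgroup R)
    (hdcc : DCCOn R (adu R I ∩ {J | IsLeftIdeal R J})) (b : R)
    (hA : ∀ J : AddSubgroup R, IsLeftIdeal R J → J.map (AddMonoidHom.mulRight b) ≠ ⊥ →
      J.map (AddMonoidHom.mulRight b) ∈ adu R I)
    (hK : ∀ J : AddSubgroup R, IsLeftIdeal R J → J ⊓ lann b ≠ ⊥ →
      J ⊓ lann b ∈ adu R I) :
    DCCOn R {J | IsLeftIdeal R J} := by
  intro f hmem hdesc
  have hmem' : ∀ n, IsLeftIdeal R (f n) := hmem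
  have hgdesc : ∀ n, (f (n + 1)).map (AddMonoidHom.mulRight b) ≤
      (f n).map (AddMonoidHom.mulRight b) := fun n => AddSubgroup.map_mono (hdesc n)
  have hkdesc : ∀ n, f (n + 1) ⊓ lann b ≤ f n ⊓ lann b := fun n =>
    inf_le_inf_right _ (hdesc n)
  obtain ⟨N₁, hN₁⟩ := stab hdcc (fun n => (f n).map (AddMonoidHom.mulRight b)) hgdesc
    (fun n h => ⟨hA _ (hmem' n) h, map_mulRight_left (hmem' n) b⟩)
  obtain ⟨N₂, hN₂⟩ := stab hdcc (fun n => f n ⊓ lann b) hkdesc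
    (fun n h => ⟨hK _ (hmem' n) h, inf_lann_left (hmem' n) b⟩)
  refine ⟨max N₁ N₂, fun n hn => ?_⟩
  have hfle : f n ≤ f (max N₁ N₂) := antitone_nat_of_succ_le hdesc hn
  have hg : (f (max N₁ N₂)).map (AddMonoidHom.mulRight b) =
      (f n).map (AddMonoidHom.mulRight b) := by
    rw [hN₁ n (le_trans (le_max_left _ _) hn), hN₁ (max N₁ N₂) (le_max_left _ _)]
  have hk : f (max N₁ N₂) ⊓ lann b = f n ⊓ lann b := by
    rw [hN₂ n (le_trans (le_max_right _ _) hn), hN₂ (max N₁ N₂) (le_max_right _ _)]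
  exact (exchangeL b (f (max N₁ N₂)) (f n) hfle hg hk).symm

theorem masterR (I : AddSubgroup R)
    (hdcc : DCCOn R (adu R I ∩ {J | IsRightIdeal R J})) (b : R)
    (hA : ∀ J : AddSubgroup R, IsRightIdeal R J → J.map (AddMonoidHom.mulLeft b) ≠ ⊥ →
      J.map (AddMonoidHom.mulLeft b) ∈ adu R I)
    (hK : ∀ J : AddSubgroup R, IsRightIdeal R J → J ⊓ rann b ≠ ⊥ →
      J ⊓ rann b ∈ adu R I) :
    DCCOn R {J | IsRightIdeal R J} := by
  intro f hmem hdesc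
  have hmem' : ∀ n, IsRightIdeal R (f n) := hmem
  have hgdesc : ∀ n, (f (n + 1)).map (AddMonoidHom.mulLeft b) ≤
      (f n).map (AddMonoidHom.mulLeft b) := fun n => AddSubgroup.map_mono (hdesc n)
  have hkdesc : ∀ n, f (n + 1) ⊓ rann b ≤ f n ⊓ rann b := fun n =>
    inf_le_inf_right _ (hdesc n)
  obtain ⟨N₁, hN₁⟩ := stab hdcc (fun n => (f n).map (AddMonoidHom.mulLeft b)) hgdesc
    (fun n h => ⟨hA _ (hmem' n) h, map_mulLeft_right (hmem' n) b⟩)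
  obtain ⟨N₂, hN₂⟩ := stab hdcc (fun n => f n ⊓ rann b) hkdesc
    (fun n h => ⟨hK _ (hmem' n) h, inf_rann_right (hmem' n) b⟩)
  refine ⟨max N₁ N₂, fun n hn => ?_⟩
  have hfle : f n ≤ f (max N₁ N₂) := antitone_nat_of_succ_le hdesc hn
  have hg : (f (max N₁ N₂)).map (AddMonoidHom.mulLeft b) =
      (f n).map (AddMonoidHom.mulLeft b) := by
    rw [hN₁ n (le_trans (le_max_left _ _) hn), hN₁ (max N₁ N₂) (le_max_left _ _)]
  have hk : f (max N₁ N₂) ⊓ rann b = f n ⊓ rann b := by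
    rw [hN₂ n (le_trans (le_max_right _ _) hn), hN₂ (max N₁ N₂) (le_max_right _ _)]
  exact (exchangeR b (f (max N₁ N₂)) (f n) hfle hg hk).symm

/-! ### Generic annihilator-kernel facts -/

theorem K_mul_lMul (J : AddSubgroup R) (b : R) : (J ⊓ lann b) * lMul b = ⊥ := by
  apply mul_eq_bot'
  intro k hk y hy
  obtain ⟨r, rfl⟩ := mem_lMul.1 hy
  have hkb : k * b = 0 := (AddSubgroup.mem_inf.1 hk).2
  rw [← mul_assoc, hkb, zero_mul]

theorem rMul_mul_K (J : AddSubgroup R) (b : R) : rMul b * (J ⊓ rann b) = ⊥ := by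
  apply mul_eq_bot'
  intro y hy k hk
  obtain ⟨r, rfl⟩ := mem_rMul.1 hy
  have hbk : b * k = 0 := (AddSubgroup.mem_inf.1 hk).2
  rw [mul_assoc, hbk, mul_zero]

/-! ### The case lemmas, left chains -/

theorem caseL1 {I : AddSubgroup R} (hI : IsOneSidedIdeal R I) (hIv : APOGVertex R I)
    (hdcc : DCCOn R (adu R I ∩ {J | IsLeftIdeal R J})) (b : R) (hb0 : b ≠ 0)
    (hb : ∀ x ∈ I, b * x = 0) : DCCOn R {J | IsLeftIdeal R J} := by
  have hIipo : I ∈ IPO R := hIv.1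
  have hIne : I ≠ ⊥ := hIv.2.1
  have hbRipo : lMul b ∈ IPO R := right_IPO (lMul_right b)
  have hbRne : lMul b ≠ ⊥ := lMul_ne_bot hb0
  apply masterL I hdcc b
  · intro J hJ hne
    have hAI : (J.map (AddMonoidHom.mulRight b)) * I = ⊥ := by
      apply mul_eq_bot'
      intro a ha x hx
      obtain ⟨j, hj, rfl⟩ := AddSubgroup.mem_map.1 ha
      show (j * b) * x = 0
      rw [mul_assoc, hb x hx, mul_zero]
    exact adu_dist1 hIv (left_IPO (map_mulRight_left hJ b)) hne (Or.inr hAI)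
  · intro J hJ hne
    have hKipo : (J ⊓ lann b) ∈ IPO R := left_IPO (inf_lann_left hJ b)
    have hKbR := K_mul_lMul J b
    rcases hI with hIl | hIr
    · have h1 : lMul b * I = ⊥ := by
        apply mul_eq_bot'
        intro y hy x hx
        obtain ⟨r, rfl⟩ := mem_lMul.1 hy
        rw [mul_assoc]
        exact hb _ (hIl r x hx)
      exact adu_dist2 hIv le_rfl hIipo hIne hbRipo hbRne hKipo hne (Or.inr h1) (Or.inl hKbR)
    · by_cases h2 : I * lMul b = ⊥
      · exact adu_dist2 hIv le_rfl hIipo hIne hbRipo hbRne hKipo hne (Or.inl h2) (Or.inl hKbR)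
      · have hCle : I * lMul b ≤ I := mul_le'.2 fun x hx y _ => hIr y x hx
        have hCipo : I * lMul b ∈ IPO R := ⟨I, lMul b, Or.inr hIr, Or.inr (lMul_right b), rfl⟩
        by_cases hM : lMul b * rMul b = ⊥
        · have h3 : (I * lMul b) * lMul b = ⊥ := by
            apply mul_eq_bot'
            intro c hc y hy
            obtain ⟨s, rfl⟩ := mem_lMul.1 hy
            refine AddSubmonoid.mul_induction_on hc ?_ ?_
            · intro x hx w hw
              obtain ⟨r, rfl⟩ := mem_lMul.1 hw
              have hbrb : (b * r) * b = 0 :=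
                pair_zero hM (mem_lMul.2 ⟨r, rfl⟩) (self_mem_rMul b)
              calc (x * (b * r)) * (b * s) = x * ((b * r) * (b * s)) := mul_assoc _ _ _
                _ = x * (((b * r) * b) * s) := by rw [← mul_assoc (b * r) b s]
                _ = 0 := by rw [hbrb, zero_mul, mul_zero]
            · intro u v hu hv
              rw [add_mul, hu, hv, add_zero]
          exact adu_dist2 hIv hCle hCipo h2 hbRipo hbRne hKipo hne (Or.inl h3) (Or.inl hKbR)
        · have hMipo : lMul b * rMul b ∈ IPO R :=
            ⟨lMul b, rMul b, Or.inr (lMul_right b), Or.inl (rMul_left b), rfl⟩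
          have h4 : (lMul b * rMul b) * (I * lMul b) = ⊥ := by
            apply mul_eq_bot'
            intro m hm c hc
            refine AddSubmonoid.mul_induction_on hm ?_
              (fun u v hu hv => by rw [add_mul, hu, hv, add_zero])
            intro y hy z hz
            obtain ⟨r, rfl⟩ := mem_lMul.1 hy
            obtain ⟨s, rfl⟩ := mem_rMul.1 hz
            refine AddSubmonoid.mul_induction_on hc ?_
              (fun u v hu hv => by rw [mul_add, hu, hv, add_zero])
            intro x hx w hw
            obtain ⟨t, rfl⟩ := mem_lMul.1 hw
            have hbx : b * x = 0 := hb x hx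
            calc ((b * r) * (s * b)) * (x * (b * t))
                = (b * r) * ((s * b) * (x * (b * t))) := mul_assoc _ _ _
              _ = (b * r) * (s * (b * (x * (b * t)))) := by rw [mul_assoc s b _]
              _ = (b * r) * (s * ((b * x) * (b * t))) := by rw [← mul_assoc b x _]
              _ = 0 := by rw [hbx, zero_mul, mul_zero, mul_zero]
          have h5 : (J ⊓ lann b) * (lMul b * rMul b) = ⊥ := by
            apply mul_eq_bot'
            intro k hk m hm
            refine AddSubmonoid.mul_induction_on hm ?_
              (fun u v hu hv => by rw [mul_add, hu, hv, add_zero])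
            intro y hy z hz
            obtain ⟨r, rfl⟩ := mem_lMul.1 hy
            obtain ⟨s, rfl⟩ := mem_rMul.1 hz
            have hkb : k * b = 0 := (AddSubgroup.mem_inf.1 hk).2
            calc k * ((b * r) * (s * b)) = (k * (b * r)) * (s * b) := (mul_assoc _ _ _).symm
              _ = ((k * b) * r) * (s * b) := by rw [← mul_assoc k b r]
              _ = 0 := by rw [hkb, zero_mul, zero_mul]
          exact adu_dist2 hIv hCle hCipo h2 hMipo hM hKipo hne (Or.inr h4) (Or.inl h5)

theorem caseL2a {I : AddSubgroup R} (hIr : IsRightIdeal R I) (hIv : APOGVertex R I)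
    (hdcc : DCCOn R (adu R I ∩ {J | IsLeftIdeal R J})) (b : R) (hb0 : b ≠ 0)
    (hxb : ∀ x ∈ I, x * b = 0) : DCCOn R {J | IsLeftIdeal R J} := by
  have hIipo : I ∈ IPO R := hIv.1
  have hIne : I ≠ ⊥ := hIv.2.1
  have hIbR : I * lMul b = ⊥ := by
    apply mul_eq_bot'
    intro x hx y hy
    obtain ⟨r, rfl⟩ := mem_lMul.1 hy
    rw [← mul_assoc, hxb x hx, zero_mul]
  apply masterL I hdcc b
  · intro J hJ hne
    have hIA : I * (J.map (AddMonoidHom.mulRight b)) = ⊥ := by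
      apply mul_eq_bot'
      intro x hx a ha
      obtain ⟨j, hj, rfl⟩ := AddSubgroup.mem_map.1 ha
      show x * (j * b) = 0
      rw [← mul_assoc]
      exact hxb (x * j) (hIr j x hx)
    exact adu_dist1 hIv (left_IPO (map_mulRight_left hJ b)) hne (Or.inl hIA)
  · intro J hJ hne
    exact adu_dist2 hIv le_rfl hIipo hIne (right_IPO (lMul_right b)) (lMul_ne_bot hb0)
      (left_IPO (inf_lann_left hJ b)) hne (Or.inl hIbR) (Or.inl (K_mul_lMul J b))

theorem caseL2b {I : AddSubgroup R} (hIv : APOGVertex R I)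
    (hdcc : DCCOn R (adu R I ∩ {J | IsLeftIdeal R J})) (u : R) (huI : u ∈ I) (hu0 : u ≠ 0)
    (hxu : ∀ x ∈ I, x * u = 0) : DCCOn R {J | IsLeftIdeal R J} := by
  have hIipo : I ∈ IPO R := hIv.1
  have hIne : I ≠ ⊥ := hIv.2.1
  have huu : u * u = 0 := hxu u huI
  have hIuR : I * lMul u = ⊥ := by
    apply mul_eq_bot'
    intro x hx y hy
    obtain ⟨r, rfl⟩ := mem_lMul.1 hy
    rw [← mul_assoc, hxu x hx, zero_mul]
  apply masterL I hdcc u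
  · intro J hJ hne
    have hAuR : (J.map (AddMonoidHom.mulRight u)) * lMul u = ⊥ := by
      apply mul_eq_bot'
      intro a ha y hy
      obtain ⟨j, hj, rfl⟩ := AddSubgroup.mem_map.1 ha
      obtain ⟨s, rfl⟩ := mem_lMul.1 hy
      show (j * u) * (u * s) = 0
      calc (j * u) * (u * s) = j * (u * (u * s)) := mul_assoc _ _ _
        _ = j * ((u * u) * s) := by rw [← mul_assoc u u s]
        _ = 0 := by rw [huu, zero_mul, mul_zero]
    exact adu_dist2 hIv le_rfl hIipo hIne (right_IPO (lMul_right u)) (lMul_ne_bot hu0)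
      (left_IPO (map_mulRight_left hJ u)) hne (Or.inl hIuR) (Or.inl hAuR)
  · intro J hJ hne
    exact adu_dist2 hIv le_rfl hIipo hIne (right_IPO (lMul_right u)) (lMul_ne_bot hu0)
      (left_IPO (inf_lann_left hJ u)) hne (Or.inl hIuR) (Or.inl (K_mul_lMul J u))

theorem dcc_left {I : AddSubgroup R} (hI : IsOneSidedIdeal R I) (hIv : APOGVertex R I)
    (hdcc : DCCOn R (adu R I ∩ {J | IsLeftIdeal R J})) : DCCOn R {J | IsLeftIdeal R J} := by
  obtain ⟨hIipo, hIne, B, hBipo, hBne, hrel⟩ := id hIv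
  obtain ⟨b, hbB, hb0⟩ := exists_ne_zero hBne
  rcases hrel with h1 | h1
  · -- I * B = ⊥
    have hxb : ∀ x ∈ I, x * b = 0 := fun x hx => pair_zero h1 hx hbB
    rcases hI with hIl | hIr
    · by_cases hex : ∃ u, u ∈ I ∧ u ≠ 0 ∧ ∀ x ∈ I, x * u = 0
      · obtain ⟨u, huI, hu0, hu⟩ := hex
        exact caseL2b hIv hdcc u huI hu0 hu
      · push_neg at hex
        have hb' : ∀ x ∈ I, b * x = 0 := by
          intro x hx
          by_contra h0
          obtain ⟨y, hyI, hy⟩ := hex (b * x) (hIl b x hx) h0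
          exact hy (by rw [← mul_assoc, hxb y hyI, zero_mul])
        exact caseL1 (Or.inl hIl) hIv hdcc b hb0 hb'
    · exact caseL2a hIr hIv hdcc b hb0 hxb
  · -- B * I = ⊥
    have hb' : ∀ x ∈ I, b * x = 0 := fun x hx => pair_zero h1 hbB hx
    exact caseL1 hI hIv hdcc b hb0 hb'

/-! ### The case lemmas, right chains -/

theorem caseR1 {I : AddSubgroup R} (hI : IsOneSidedIdeal R I) (hIv : APOGVertex R I)
    (hdcc : DCCOn R (adu R I ∩ {J | IsRightIdeal R J})) (b : R) (hb0 : b ≠ 0)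
    (hb : ∀ x ∈ I, x * b = 0) : DCCOn R {J | IsRightIdeal R J} := by
  have hIipo : I ∈ IPO R := hIv.1
  have hIne : I ≠ ⊥ := hIv.2.1
  have hRbipo : rMul b ∈ IPO R := left_IPO (rMul_left b)
  have hRbne : rMul b ≠ ⊥ := rMul_ne_bot hb0
  apply masterR I hdcc b
  · intro J hJ hne
    have hIA : I * (J.map (AddMonoidHom.mulLeft b)) = ⊥ := by
      apply mul_eq_bot'
      intro x hx a ha
      obtain ⟨j, hj, rfl⟩ := AddSubgroup.mem_map.1 ha
      show x * (b * j) = 0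
      rw [← mul_assoc, hb x hx, zero_mul]
    exact adu_dist1 hIv (right_IPO (map_mulLeft_right hJ b)) hne (Or.inl hIA)
  · intro J hJ hne
    have hKipo : (J ⊓ rann b) ∈ IPO R := right_IPO (inf_rann_right hJ b)
    have hRbK := rMul_mul_K J b
    rcases hI with hIl | hIr
    · by_cases h2 : rMul b * I = ⊥
      · exact adu_dist2 hIv le_rfl hIipo hIne hRbipo hRbne hKipo hne (Or.inr h2) (Or.inr hRbK)
      · have hCle : rMul b * I ≤ I := mul_le'.2 fun y _ x hx => hIl y x hx
        have hCipo : rMul b * I ∈ IPO R := ⟨rMul b, I, Or.inl (rMul_left b), Or.inl hIl, rfl⟩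
        by_cases hM : lMul b * rMul b = ⊥
        · have h3 : rMul b * (rMul b * I) = ⊥ := by
            apply mul_eq_bot'
            intro y hy c hc
            obtain ⟨s, rfl⟩ := mem_rMul.1 hy
            refine AddSubmonoid.mul_induction_on hc ?_ ?_
            · intro w hw x hx
              obtain ⟨r, rfl⟩ := mem_rMul.1 hw
              have hbrb : (b * r) * b = 0 :=
                pair_zero hM (mem_lMul.2 ⟨r, rfl⟩) (self_mem_rMul b)
              calc (s * b) * ((r * b) * x) = ((s * b) * (r * b)) * x := (mul_assoc _ _ _).symm
                _ = (s * (b * (r * b))) * x := by rw [mul_assoc s b (r * b)]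
                _ = (s * ((b * r) * b)) * x := by rw [← mul_assoc b r b]
                _ = 0 := by rw [hbrb, mul_zero, zero_mul]
            · intro u v hu hv
              rw [mul_add, hu, hv, add_zero]
          exact adu_dist2 hIv hCle hCipo h2 hRbipo hRbne hKipo hne (Or.inr h3) (Or.inr hRbK)
        · have hMipo : lMul b * rMul b ∈ IPO R :=
            ⟨lMul b, rMul b, Or.inr (lMul_right b), Or.inl (rMul_left b), rfl⟩
          have h4 : (rMul b * I) * (lMul b * rMul b) = ⊥ := by
            apply mul_eq_bot'
            intro c hc m hm
            refine AddSubmonoid.mul_induction_on hc ?_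
              (fun u v hu hv => by rw [add_mul, hu, hv, add_zero])
            intro y hy x hx
            obtain ⟨r, rfl⟩ := mem_rMul.1 hy
            refine AddSubmonoid.mul_induction_on hm ?_
              (fun u v hu hv => by rw [mul_add, hu, hv, add_zero])
            intro z hz w hw
            obtain ⟨s, rfl⟩ := mem_lMul.1 hz
            obtain ⟨t, rfl⟩ := mem_rMul.1 hw
            calc ((r * b) * x) * ((b * s) * (t * b))
                = (r * b) * (x * ((b * s) * (t * b))) := mul_assoc _ _ _
              _ = (r * b) * ((x * (b * s)) * (t * b)) := by rw [← mul_assoc x (b * s) _]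
              _ = (r * b) * (((x * b) * s) * (t * b)) := by rw [← mul_assoc x b s]
              _ = 0 := by rw [hb x hx, zero_mul, zero_mul, mul_zero]
          have h5 : (lMul b * rMul b) * (J ⊓ rann b) = ⊥ := by
            apply mul_eq_bot'
            intro m hm k hk
            refine AddSubmonoid.mul_induction_on hm ?_
              (fun u v hu hv => by rw [add_mul, hu, hv, add_zero])
            intro z hz w hw
            obtain ⟨s, rfl⟩ := mem_lMul.1 hz
            obtain ⟨t, rfl⟩ := mem_rMul.1 hw
            have hbk : b * k = 0 := (AddSubgroup.mem_inf.1 hk).2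
            calc ((b * s) * (t * b)) * k = (b * s) * ((t * b) * k) := mul_assoc _ _ _
              _ = (b * s) * (t * (b * k)) := by rw [mul_assoc t b k]
              _ = 0 := by rw [hbk, mul_zero, mul_zero]
          exact adu_dist2 hIv hCle hCipo h2 hMipo hM hKipo hne (Or.inl h4) (Or.inr h5)
    · have h1 : I * rMul b = ⊥ := by
        apply mul_eq_bot'
        intro x hx y hy
        obtain ⟨r, rfl⟩ := mem_rMul.1 hy
        rw [← mul_assoc]
        exact hb _ (hIr r x hx)
      exact adu_dist2 hIv le_rfl hIipo hIne hRbipo hRbne hKipo hne (Or.inl h1) (Or.inr hRbK)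

theorem caseR2a {I : AddSubgroup R} (hIl : IsLeftIdeal R I) (hIv : APOGVertex R I)
    (hdcc : DCCOn R (adu R I ∩ {J | IsRightIdeal R J})) (b : R) (hb0 : b ≠ 0)
    (hbx : ∀ x ∈ I, b * x = 0) : DCCOn R {J | IsRightIdeal R J} := by
  have hIipo : I ∈ IPO R := hIv.1
  have hIne : I ≠ ⊥ := hIv.2.1
  have hRbI : rMul b * I = ⊥ := by
    apply mul_eq_bot'
    intro y hy x hx
    obtain ⟨r, rfl⟩ := mem_rMul.1 hy
    rw [mul_assoc, hbx x hx, mul_zero]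
  apply masterR I hdcc b
  · intro J hJ hne
    have hAI : (J.map (AddMonoidHom.mulLeft b)) * I = ⊥ := by
      apply mul_eq_bot'
      intro a ha x hx
      obtain ⟨j, hj, rfl⟩ := AddSubgroup.mem_map.1 ha
      show (b * j) * x = 0
      rw [mul_assoc]
      exact hbx _ (hIl j x hx)
    exact adu_dist1 hIv (right_IPO (map_mulLeft_right hJ b)) hne (Or.inr hAI)
  · intro J hJ hne
    exact adu_dist2 hIv le_rfl hIipo hIne (left_IPO (rMul_left b)) (rMul_ne_bot hb0)
      (right_IPO (inf_rann_right hJ b)) hne (Or.inr hRbI) (Or.inr (rMul_mul_K J b))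

theorem caseR2b {I : AddSubgroup R} (hIv : APOGVertex R I)
    (hdcc : DCCOn R (adu R I ∩ {J | IsRightIdeal R J})) (u : R) (huI : u ∈ I) (hu0 : u ≠ 0)
    (hux : ∀ x ∈ I, u * x = 0) : DCCOn R {J | IsRightIdeal R J} := by
  have hIipo : I ∈ IPO R := hIv.1
  have hIne : I ≠ ⊥ := hIv.2.1
  have huu : u * u = 0 := hux u huI
  have hRuI : rMul u * I = ⊥ := by
    apply mul_eq_bot'
    intro y hy x hx
    obtain ⟨r, rfl⟩ := mem_rMul.1 hy
    rw [mul_assoc, hux x hx, mul_zero]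
  apply masterR I hdcc u
  · intro J hJ hne
    have hRuA : rMul u * (J.map (AddMonoidHom.mulLeft u)) = ⊥ := by
      apply mul_eq_bot'
      intro y hy a ha
      obtain ⟨r, rfl⟩ := mem_rMul.1 hy
      obtain ⟨j, hj, rfl⟩ := AddSubgroup.mem_map.1 ha
      show (r * u) * (u * j) = 0
      calc (r * u) * (u * j) = r * (u * (u * j)) := mul_assoc _ _ _
        _ = r * ((u * u) * j) := by rw [← mul_assoc u u j]
        _ = 0 := by rw [huu, zero_mul, mul_zero]
    exact adu_dist2 hIv le_rfl hIipo hIne (left_IPO (rMul_left u)) (rMul_ne_bot hu0)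
      (right_IPO (map_mulLeft_right hJ u)) hne (Or.inr hRuI) (Or.inr hRuA)
  · intro J hJ hne
    exact adu_dist2 hIv le_rfl hIipo hIne (left_IPO (rMul_left u)) (rMul_ne_bot hu0)
      (right_IPO (inf_rann_right hJ u)) hne (Or.inr hRuI) (Or.inr (rMul_mul_K J u))

theorem dcc_right {I : AddSubgroup R} (hI : IsOneSidedIdeal R I) (hIv : APOGVertex R I)
    (hdcc : DCCOn R (adu R I ∩ {J | IsRightIdeal R J})) : DCCOn R {J | IsRightIdeal R J} := by
  obtain ⟨hIipo, hIne, B, hBipo, hBne, hrel⟩ := id hIv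
  obtain ⟨b, hbB, hb0⟩ := exists_ne_zero hBne
  rcases hrel with h1 | h1
  · -- I * B = ⊥
    have hxb : ∀ x ∈ I, x * b = 0 := fun x hx => pair_zero h1 hx hbB
    exact caseR1 hI hIv hdcc b hb0 hxb
  · -- B * I = ⊥
    have hbx : ∀ x ∈ I, b * x = 0 := fun x hx => pair_zero h1 hbB hx
    rcases hI with hIl | hIr
    · exact caseR2a hIl hIv hdcc b hb0 hbx
    · by_cases hex : ∃ u, u ∈ I ∧ u ≠ 0 ∧ ∀ x ∈ I, u * x = 0
      · obtain ⟨u, huI, hu0, hu⟩ := hex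
        exact caseR2b hIv hdcc u huI hu0 hu
      · push_neg at hex
        have hxb : ∀ x ∈ I, x * b = 0 := by
          intro x hx
          by_contra h0
          obtain ⟨y, hyI, hy⟩ := hex (x * b) (hIr b x hx) h0
          exact hy (by rw [mul_assoc, hbx y hyI, mul_zero])
        exact caseR1 (Or.inr hIr) hIv hdcc b hb0 hxb

end ApogAux


/-- Suppose `APOG(R) ≠ ∅` and `I` is a one-sided ideal of `R` which is a
vertex of `APOG(R)`.  Then `R` is left and right Artinian iff `adu(I)` has DCC both on
its members that are left ideals and on its members that are right ideals. -/
theorem artinian_iff_adu_dcc (R : Type*) [Ring R]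
    (hne : ∃ A : AddSubgroup R, APOGVertex R A)
    (I : AddSubgroup R) (hI : IsOneSidedIdeal R I) (hIv : APOGVertex R I) :
    (DCCOn R {J | IsLeftIdeal R J} ∧ DCCOn R {J | IsRightIdeal R J}) ↔
      (DCCOn R (adu R I ∩ {J | IsLeftIdeal R J}) ∧
        DCCOn R (adu R I ∩ {J | IsRightIdeal R J})) := by
  constructor
  · rintro ⟨hl, hr⟩
    constructor
    · intro f hmem hdesc
      exact hl f (fun n => (hmem n).2) hdesc
    · intro f hmem hdesc
      exact hr f (fun n => (hmem n).2) hdesc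
  · rintro ⟨h1, h2⟩
    exact ⟨ApogAux.dcc_left hI hIv h1, ApogAux.dcc_right hI hIv h2⟩
end

section
/- Let R be a ring with identity such that APOG(R) ≠ ∅, and let I be a left or right ideal of R that is a vertex of APOG(R). Then R is a left and right Noetherian ring if and only if adu(I) satisfies the ascending chain condition both on its elements that are left ideals of R and on its elements that are right ideals of R. -/
open scoped Pointwise

section Helpers
variable {R : Type*} [Ring R]

lemma myMul_mem_mul {A B : AddSubgroup R} {x y : R} (hx : x ∈ A) (hy : y ∈ B) :
    x * y ∈ A * B := AddSubmonoid.mul_mem_mul hx hy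

lemma myMul_le {A B C : AddSubgroup R} (h : ∀ x ∈ A, ∀ y ∈ B, x * y ∈ C) :
    A * B ≤ C := fun _ hz => AddSubmonoid.mul_le.2 h hz

lemma mul_eq_bot_iff' (A B : AddSubgroup R) :
    A * B = ⊥ ↔ ∀ x ∈ A, ∀ y ∈ B, x * y = 0 := by
  constructor
  · intro h x hx y hy
    have := myMul_mem_mul hx hy
    rw [h, AddSubgroup.mem_bot] at this
    exact this
  · intro h
    refine le_bot_iff.1 (myMul_le fun x hx y hy => ?_)
    rw [AddSubgroup.mem_bot]
    exact h x hx y hy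

lemma exists_ne_zero_of_ne_bot {A : AddSubgroup R} (h : A ≠ ⊥) : ∃ x ∈ A, x ≠ 0 := by
  by_contra hc
  push_neg at hc
  exact h ((AddSubgroup.eq_bot_iff_forall A).2 hc)

lemma left_mem_IPO {J : AddSubgroup R} (hJ : IsLeftIdeal R J) : J ∈ IPO R := by
  refine ⟨⊤, J, Or.inl fun _ _ _ => trivial, Or.inl hJ, ?_⟩
  refine le_antisymm (fun x hx => ?_) (myMul_le fun r _ x hx => hJ r x hx)
  have := myMul_mem_mul (AddSubgroup.mem_top (1 : R)) hx
  rwa [one_mul] at this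

lemma right_mem_IPO {J : AddSubgroup R} (hJ : IsRightIdeal R J) : J ∈ IPO R := by
  refine ⟨J, ⊤, Or.inr hJ, Or.inr fun _ _ _ => trivial, ?_⟩
  refine le_antisymm (fun x hx => ?_) (myMul_le fun x hx r _ => hJ r x hx)
  have := myMul_mem_mul hx (AddSubgroup.mem_top (1 : R))
  rwa [mul_one] at this

/-- The left ideal `R·a`. -/
def La (a : R) : AddSubgroup R := (AddMonoidHom.mulRight a).range
/-- The right ideal `a·R`. -/
def Da (a : R) : AddSubgroup R := (AddMonoidHom.mulLeft a).range

lemma mem_La {a x : R} : x ∈ La a ↔ ∃ r, r * a = x := Iff.rfl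
lemma mem_Da {a x : R} : x ∈ Da a ↔ ∃ r, a * r = x := Iff.rfl

lemma La_isLeft (a : R) : IsLeftIdeal R (La a) := by
  rintro r x ⟨s, rfl⟩
  exact ⟨r * s, mul_assoc r s a⟩

lemma Da_isRight (a : R) : IsRightIdeal R (Da a) := by
  rintro r x ⟨s, rfl⟩
  exact ⟨s * r, (mul_assoc a s r).symm⟩

lemma La_ne_bot {a : R} (ha : a ≠ 0) : La a ≠ ⊥ := by
  intro h
  have : a ∈ La a := ⟨1, one_mul a⟩
  rw [h, AddSubgroup.mem_bot] at this
  exact ha this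

lemma Da_ne_bot {a : R} (ha : a ≠ 0) : Da a ≠ ⊥ := by
  intro h
  have : a ∈ Da a := ⟨1, mul_one a⟩
  rw [h, AddSubgroup.mem_bot] at this
  exact ha this

lemma La_mem_IPO (a : R) : La a ∈ IPO R := left_mem_IPO (La_isLeft a)
lemma Da_mem_IPO (a : R) : Da a ∈ IPO R := right_mem_IPO (Da_isRight a)

lemma vertex_of {A B : AddSubgroup R} (hA : A ∈ IPO R) (hA0 : A ≠ ⊥)
    (hB : B ∈ IPO R) (hB0 : B ≠ ⊥) (h : A * B = ⊥ ∨ B * A = ⊥) : APOGVertex R A :=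
  ⟨hA, hA0, B, hB, hB0, h⟩

lemma mem_adu_of_adj {I C A : AddSubgroup R} (hC : APOGVertex R C) (hCI : C ≤ I)
    (hA : A ∈ IPO R) (hA0 : A ≠ ⊥) (h : A * C = ⊥ ∨ C * A = ⊥) : A ∈ adu R I := by
  have hAv : APOGVertex R A := vertex_of hA hA0 hC.1 hC.2.1 h
  refine ⟨C, hC, hCI, hAv, ?_⟩
  by_cases he : A = C
  · exact Or.inl he
  · exact Or.inr (Or.inl ⟨fun hh => he hh.symm, h.symm⟩)

lemma mem_adu_of_dist2 {I C M A : AddSubgroup R} (hC : APOGVertex R C) (hCI : C ≤ I)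
    (hM : M ∈ IPO R) (hM0 : M ≠ ⊥) (hCM : C * M = ⊥ ∨ M * C = ⊥)
    (hA : A ∈ IPO R) (hA0 : A ≠ ⊥) (hAM : A * M = ⊥ ∨ M * A = ⊥) : A ∈ adu R I := by
  have hMv : APOGVertex R M := vertex_of hM hM0 hC.1 hC.2.1 hCM.symm
  have hAv : APOGVertex R A := vertex_of hA hA0 hM hM0 hAM
  refine ⟨C, hC, hCI, hAv, ?_⟩
  by_cases heAC : A = C
  · exact Or.inl heAC
  by_cases heAM : A = M
  · subst heAM
    exact Or.inr (Or.inl ⟨fun h => heAC h.symm, hCM⟩)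
  by_cases heCM : C = M
  · subst heCM
    exact Or.inr (Or.inl ⟨fun h => heAC h.symm, hAM.symm⟩)
  · exact Or.inr (Or.inr ⟨M, hMv, ⟨heCM, hCM⟩, ⟨fun h => heAM h.symm, hAM.symm⟩⟩)

end Helpers
section Master
variable {R : Type*} [Ring R]

lemma acc_with_bot {T : Set (AddSubgroup R)} (hT : ACCOn R T) (f : ℕ → AddSubgroup R)
    (hmem : ∀ n, f n = ⊥ ∨ f n ∈ T) (hmono : ∀ n, f n ≤ f (n + 1)) :
    ∃ N, ∀ n, N ≤ n → f n = f N := by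
  by_cases hb : ∀ n, f n = ⊥
  · exact ⟨0, fun n _ => (hb n).trans (hb 0).symm⟩
  · push_neg at hb
    obtain ⟨k, hk⟩ := hb
    have hmono' : Monotone f := monotone_nat_of_le_succ hmono
    have hne : ∀ n, f (n + k) ≠ ⊥ := by
      intro n h
      exact hk (le_bot_iff.1 (h ▸ hmono' (Nat.le_add_left k n)))
    obtain ⟨N, hN⟩ := hT (fun n => f (n + k))
      (fun n => (hmem (n + k)).resolve_left (hne n))
      (fun n => by simpa [Nat.add_right_comm] using hmono (n + k))
    refine ⟨N + k, fun n hn => ?_⟩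
    obtain ⟨m, rfl⟩ := Nat.exists_eq_add_of_le hn
    have h1 : f (N + m + k) = f (N + k) := hN (N + m) (Nat.le_add_right N m)
    have h2 : N + k + m = N + m + k := by omega
    rw [h2, h1]

lemma master_left {I : AddSubgroup R} (a : R)
    (H1 : ∀ J : AddSubgroup R, IsLeftIdeal R J → J ≠ ⊥ → (∀ x ∈ J, x * a = 0) →
      J ∈ adu R I)
    (H2 : ∀ J : AddSubgroup R, IsLeftIdeal R J → J ≠ ⊥ → (∀ x ∈ J, ∃ r, r * a = x) →
      J ∈ adu R I)
    (hacc : ACCOn R (adu R I ∩ {J | IsLeftIdeal R J})) :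
    ACCOn R {J | IsLeftIdeal R J} := by
  intro f hf hmono
  have hmono' : Monotone f := monotone_nat_of_le_succ hmono
  set p : ℕ → AddSubgroup R := fun n => f n ⊓ (AddMonoidHom.mulRight a).ker with hp
  set q : ℕ → AddSubgroup R := fun n => (f n).map (AddMonoidHom.mulRight a) with hq
  have hpl : ∀ n, IsLeftIdeal R (p n) := by
    intro n r x hx
    exact ⟨hf n r x hx.1, by
      have hx2 : x * a = 0 := hx.2
      show r * x * a = 0
      rw [mul_assoc, hx2, mul_zero]⟩
  have hql : ∀ n, IsLeftIdeal R (q n) := by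
    rintro n r x ⟨j, hj, rfl⟩
    exact ⟨r * j, hf n r j hj, mul_assoc r j a⟩
  obtain ⟨N1, hN1⟩ := acc_with_bot hacc p
    (fun n => by
      by_cases h : p n = ⊥
      · exact Or.inl h
      · exact Or.inr ⟨H1 (p n) (hpl n) h (fun x hx => hx.2), hpl n⟩)
    (fun n => inf_le_inf_right _ (hmono n))
  obtain ⟨N2, hN2⟩ := acc_with_bot hacc q
    (fun n => by
      by_cases h : q n = ⊥
      · exact Or.inl h
      · refine Or.inr ⟨H2 (q n) (hql n) h ?_, hql n⟩
        rintro x ⟨j, _, rfl⟩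
        exact ⟨j, rfl⟩)
    (fun n => AddSubgroup.map_mono (hmono n))
  refine ⟨max N1 N2, fun n hn => ?_⟩
  refine le_antisymm (fun x hx => ?_) (hmono' hn)
  have hqn : q n = q (max N1 N2) :=
    (hN2 n (le_trans (le_max_right _ _) hn)).trans (hN2 _ (le_max_right _ _)).symm
  have hpn : p n = p (max N1 N2) :=
    (hN1 n (le_trans (le_max_left _ _) hn)).trans (hN1 _ (le_max_left _ _)).symm
  have hxa : x * a ∈ q (max N1 N2) := hqn ▸ ⟨x, hx, rfl⟩
  obtain ⟨y, hy, hya⟩ := hxa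
  have hxy : x - y ∈ p n := by
    constructor
    · exact (f n).sub_mem hx (hmono' hn hy)
    · show (x - y) * a = 0
      have : y * a = x * a := hya
      rw [sub_mul, this, sub_self]
  rw [hpn] at hxy
  have : x - y ∈ f (max N1 N2) := hxy.1
  have := (f (max N1 N2)).add_mem this hy
  rwa [sub_add_cancel] at this

lemma master_right {I : AddSubgroup R} (a : R)
    (H3 : ∀ K : AddSubgroup R, IsRightIdeal R K → K ≠ ⊥ → (∀ x ∈ K, a * x = 0) →
      K ∈ adu R I)
    (H4 : ∀ K : AddSubgroup R, IsRightIdeal R K → K ≠ ⊥ → (∀ x ∈ K, ∃ r, a * r = x) →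
      K ∈ adu R I)
    (hacc : ACCOn R (adu R I ∩ {J | IsRightIdeal R J})) :
    ACCOn R {J | IsRightIdeal R J} := by
  intro f hf hmono
  have hmono' : Monotone f := monotone_nat_of_le_succ hmono
  set p : ℕ → AddSubgroup R := fun n => f n ⊓ (AddMonoidHom.mulLeft a).ker with hp
  set q : ℕ → AddSubgroup R := fun n => (f n).map (AddMonoidHom.mulLeft a) with hq
  have hpl : ∀ n, IsRightIdeal R (p n) := by
    intro n r x hx
    exact ⟨hf n r x hx.1, by
      have hx2 : a * x = 0 := hx.2
      show a * (x * r) = 0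
      rw [← mul_assoc, hx2, zero_mul]⟩
  have hql : ∀ n, IsRightIdeal R (q n) := by
    rintro n r x ⟨j, hj, rfl⟩
    exact ⟨j * r, hf n r j hj, (mul_assoc a j r).symm⟩
  obtain ⟨N1, hN1⟩ := acc_with_bot hacc p
    (fun n => by
      by_cases h : p n = ⊥
      · exact Or.inl h
      · exact Or.inr ⟨H3 (p n) (hpl n) h (fun x hx => hx.2), hpl n⟩)
    (fun n => inf_le_inf_right _ (hmono n))
  obtain ⟨N2, hN2⟩ := acc_with_bot hacc q
    (fun n => by
      by_cases h : q n = ⊥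
      · exact Or.inl h
      · refine Or.inr ⟨H4 (q n) (hql n) h ?_, hql n⟩
        rintro x ⟨j, _, rfl⟩
        exact ⟨j, rfl⟩)
    (fun n => AddSubgroup.map_mono (hmono n))
  refine ⟨max N1 N2, fun n hn => ?_⟩
  refine le_antisymm (fun x hx => ?_) (hmono' hn)
  have hqn : q n = q (max N1 N2) :=
    (hN2 n (le_trans (le_max_right _ _) hn)).trans (hN2 _ (le_max_right _ _)).symm
  have hpn : p n = p (max N1 N2) :=
    (hN1 n (le_trans (le_max_left _ _) hn)).trans (hN1 _ (le_max_left _ _)).symm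
  have hxa : a * x ∈ q (max N1 N2) := hqn ▸ ⟨x, hx, rfl⟩
  obtain ⟨y, hy, hya⟩ := hxa
  have hxy : x - y ∈ p n := by
    constructor
    · exact (f n).sub_mem hx (hmono' hn hy)
    · show a * (x - y) = 0
      have : a * y = a * x := hya
      rw [mul_sub, this, sub_self]
  rw [hpn] at hxy
  have : x - y ∈ f (max N1 N2) := hxy.1
  have := (f (max N1 N2)).add_mem this hy
  rwa [sub_add_cancel] at this

end Master
section Cases
variable {R : Type*} [Ring R]

/-- The "both-sided annihilating element" case: `b ≠ 0` with `i*b = 0` and `b*i = 0`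
for all `i ∈ I`. -/
lemma conclude_two_sided {I : AddSubgroup R} (hIv : APOGVertex R I)
    {b : R} (hb0 : b ≠ 0) (hIb : ∀ i ∈ I, i * b = 0) (hbI : ∀ i ∈ I, b * i = 0)
    (haccL : ACCOn R (adu R I ∩ {J | IsLeftIdeal R J}))
    (haccR : ACCOn R (adu R I ∩ {J | IsRightIdeal R J})) :
    ACCOn R {J | IsLeftIdeal R J} ∧ ACCOn R {J | IsRightIdeal R J} := by
  have hIDb : I * Da b = ⊥ := by
    refine (mul_eq_bot_iff' _ _).2 fun i hi y hy => ?_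
    obtain ⟨s, rfl⟩ := hy
    show i * (b * s) = 0
    rw [← mul_assoc, hIb i hi, zero_mul]
  have hLbI : La b * I = ⊥ := by
    refine (mul_eq_bot_iff' _ _).2 fun x hx i hi => ?_
    obtain ⟨r, rfl⟩ := hx
    show r * b * i = 0
    rw [mul_assoc, hbI i hi, mul_zero]
  constructor
  · refine master_left b ?_ ?_ haccL
    · intro J hJl hJ0 hJa
      have hJDb : J * Da b = ⊥ := by
        refine (mul_eq_bot_iff' _ _).2 fun x hx y hy => ?_
        obtain ⟨s, rfl⟩ := hy
        show x * (b * s) = 0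
        rw [← mul_assoc, hJa x hx, zero_mul]
      exact mem_adu_of_dist2 hIv le_rfl (Da_mem_IPO b) (Da_ne_bot hb0)
        (Or.inl hIDb) (left_mem_IPO hJl) hJ0 (Or.inl hJDb)
    · intro J hJl hJ0 hJr
      have hJI : J * I = ⊥ := by
        refine (mul_eq_bot_iff' _ _).2 fun x hx i hi => ?_
        obtain ⟨r, rfl⟩ := hJr x hx
        rw [mul_assoc, hbI i hi, mul_zero]
      exact mem_adu_of_adj hIv le_rfl (left_mem_IPO hJl) hJ0 (Or.inl hJI)
  · refine master_right b ?_ ?_ haccR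
    · intro K hK hK0 hKa
      have hLbK : La b * K = ⊥ := by
        refine (mul_eq_bot_iff' _ _).2 fun x hx y hy => ?_
        obtain ⟨r, rfl⟩ := hx
        show r * b * y = 0
        rw [mul_assoc, hKa y hy, mul_zero]
      exact mem_adu_of_dist2 hIv le_rfl (La_mem_IPO b) (La_ne_bot hb0)
        (Or.inr hLbI) (right_mem_IPO hK) hK0 (Or.inr hLbK)
    · intro K hK hK0 hKr
      have hIK : I * K = ⊥ := by
        refine (mul_eq_bot_iff' _ _).2 fun i hi x hx => ?_
        obtain ⟨s, rfl⟩ := hKr x hx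
        rw [← mul_assoc, hIb i hi, zero_mul]
      exact mem_adu_of_adj hIv le_rfl (right_mem_IPO hK) hK0 (Or.inr hIK)

/-- Case: `I` a right ideal and `I*b = 0` for `b ≠ 0`. -/
lemma conclude_right_annr {I : AddSubgroup R} (hIv : APOGVertex R I)
    (hIr : IsRightIdeal R I)
    {b : R} (hb0 : b ≠ 0) (hIb : ∀ i ∈ I, i * b = 0)
    (haccL : ACCOn R (adu R I ∩ {J | IsLeftIdeal R J}))
    (haccR : ACCOn R (adu R I ∩ {J | IsRightIdeal R J})) :
    ACCOn R {J | IsLeftIdeal R J} ∧ ACCOn R {J | IsRightIdeal R J} := by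
  have hILb : I * La b = ⊥ := by
    refine (mul_eq_bot_iff' _ _).2 fun i hi y hy => ?_
    obtain ⟨r, rfl⟩ := hy
    show i * (r * b) = 0
    rw [← mul_assoc]
    exact hIb _ (hIr r i hi)
  have hIDb : I * Da b = ⊥ := by
    refine (mul_eq_bot_iff' _ _).2 fun i hi y hy => ?_
    obtain ⟨s, rfl⟩ := hy
    show i * (b * s) = 0
    rw [← mul_assoc, hIb i hi, zero_mul]
  constructor
  · refine master_left b ?_ ?_ haccL
    · intro J hJl hJ0 hJa
      have hJDb : J * Da b = ⊥ := by
        refine (mul_eq_bot_iff' _ _).2 fun x hx y hy => ?_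
        obtain ⟨s, rfl⟩ := hy
        show x * (b * s) = 0
        rw [← mul_assoc, hJa x hx, zero_mul]
      exact mem_adu_of_dist2 hIv le_rfl (Da_mem_IPO b) (Da_ne_bot hb0)
        (Or.inl hIDb) (left_mem_IPO hJl) hJ0 (Or.inl hJDb)
    · intro J hJl hJ0 hJr
      have hIJ : I * J = ⊥ := by
        refine (mul_eq_bot_iff' _ _).2 fun i hi x hx => ?_
        obtain ⟨r, rfl⟩ := hJr x hx
        rw [← mul_assoc]
        exact hIb _ (hIr r i hi)
      exact mem_adu_of_adj hIv le_rfl (left_mem_IPO hJl) hJ0 (Or.inr hIJ)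
  · refine master_right b ?_ ?_ haccR
    · intro K hK hK0 hKa
      have hLbK : La b * K = ⊥ := by
        refine (mul_eq_bot_iff' _ _).2 fun x hx y hy => ?_
        obtain ⟨r, rfl⟩ := hx
        show r * b * y = 0
        rw [mul_assoc, hKa y hy, mul_zero]
      exact mem_adu_of_dist2 hIv le_rfl (La_mem_IPO b) (La_ne_bot hb0)
        (Or.inl hILb) (right_mem_IPO hK) hK0 (Or.inr hLbK)
    · intro K hK hK0 hKr
      have hIK : I * K = ⊥ := by
        refine (mul_eq_bot_iff' _ _).2 fun i hi x hx => ?_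
        obtain ⟨s, rfl⟩ := hKr x hx
        rw [← mul_assoc, hIb i hi, zero_mul]
      exact mem_adu_of_adj hIv le_rfl (right_mem_IPO hK) hK0 (Or.inr hIK)

/-- Case: `I` a left ideal and `b*I = 0` for `b ≠ 0`. -/
lemma conclude_left_annl {I : AddSubgroup R} (hIv : APOGVertex R I)
    (hIl : IsLeftIdeal R I)
    {b : R} (hb0 : b ≠ 0) (hbI : ∀ i ∈ I, b * i = 0)
    (haccL : ACCOn R (adu R I ∩ {J | IsLeftIdeal R J}))
    (haccR : ACCOn R (adu R I ∩ {J | IsRightIdeal R J})) :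
    ACCOn R {J | IsLeftIdeal R J} ∧ ACCOn R {J | IsRightIdeal R J} := by
  have hLbI : La b * I = ⊥ := by
    refine (mul_eq_bot_iff' _ _).2 fun x hx i hi => ?_
    obtain ⟨r, rfl⟩ := hx
    show r * b * i = 0
    rw [mul_assoc, hbI i hi, mul_zero]
  have hDbI : Da b * I = ⊥ := by
    refine (mul_eq_bot_iff' _ _).2 fun x hx i hi => ?_
    obtain ⟨s, rfl⟩ := hx
    show b * s * i = 0
    rw [mul_assoc]
    exact hbI _ (hIl s i hi)
  constructor
  · refine master_left b ?_ ?_ haccL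
    · intro J hJl hJ0 hJa
      have hJDb : J * Da b = ⊥ := by
        refine (mul_eq_bot_iff' _ _).2 fun x hx y hy => ?_
        obtain ⟨s, rfl⟩ := hy
        show x * (b * s) = 0
        rw [← mul_assoc, hJa x hx, zero_mul]
      exact mem_adu_of_dist2 hIv le_rfl (Da_mem_IPO b) (Da_ne_bot hb0)
        (Or.inr hDbI) (left_mem_IPO hJl) hJ0 (Or.inl hJDb)
    · intro J hJl hJ0 hJr
      have hJI : J * I = ⊥ := by
        refine (mul_eq_bot_iff' _ _).2 fun x hx i hi => ?_
        obtain ⟨r, rfl⟩ := hJr x hx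
        rw [mul_assoc, hbI i hi, mul_zero]
      exact mem_adu_of_adj hIv le_rfl (left_mem_IPO hJl) hJ0 (Or.inl hJI)
  · refine master_right b ?_ ?_ haccR
    · intro K hK hK0 hKa
      have hLbK : La b * K = ⊥ := by
        refine (mul_eq_bot_iff' _ _).2 fun x hx y hy => ?_
        obtain ⟨r, rfl⟩ := hx
        show r * b * y = 0
        rw [mul_assoc, hKa y hy, mul_zero]
      exact mem_adu_of_dist2 hIv le_rfl (La_mem_IPO b) (La_ne_bot hb0)
        (Or.inr hLbI) (right_mem_IPO hK) hK0 (Or.inr hLbK)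
    · intro K hK hK0 hKr
      have hKI : K * I = ⊥ := by
        refine (mul_eq_bot_iff' _ _).2 fun x hx i hi => ?_
        obtain ⟨s, rfl⟩ := hKr x hx
        rw [mul_assoc]
        exact hbI _ (hIl s i hi)
      exact mem_adu_of_adj hIv le_rfl (right_mem_IPO hK) hK0 (Or.inl hKI)

/-- Case: a nonzero `a ∈ I` with `a*a = 0`, where `I` is a left ideal. -/
lemma conclude_left_sq {I : AddSubgroup R} (hIl : IsLeftIdeal R I)
    {a : R} (ha0 : a ≠ 0) (haI : a ∈ I) (haa : a * a = 0)
    (haccL : ACCOn R (adu R I ∩ {J | IsLeftIdeal R J}))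
    (haccR : ACCOn R (adu R I ∩ {J | IsRightIdeal R J})) :
    ACCOn R {J | IsLeftIdeal R J} ∧ ACCOn R {J | IsRightIdeal R J} := by
  have hsub : La a ≤ I := by
    rintro x ⟨r, rfl⟩
    exact hIl r a haI
  have hLaDa : La a * Da a = ⊥ := by
    refine (mul_eq_bot_iff' _ _).2 fun x hx y hy => ?_
    obtain ⟨r, rfl⟩ := hx
    obtain ⟨s, rfl⟩ := hy
    show r * a * (a * s) = 0
    rw [mul_assoc, ← mul_assoc a a s, haa, zero_mul, mul_zero]
  have hCv : APOGVertex R (La a) :=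
    vertex_of (La_mem_IPO a) (La_ne_bot ha0) (Da_mem_IPO a) (Da_ne_bot ha0)
      (Or.inl hLaDa)
  constructor
  · refine master_left a ?_ ?_ haccL
    · intro J hJl hJ0 hJa
      have hJDa : J * Da a = ⊥ := by
        refine (mul_eq_bot_iff' _ _).2 fun x hx y hy => ?_
        obtain ⟨s, rfl⟩ := hy
        show x * (a * s) = 0
        rw [← mul_assoc, hJa x hx, zero_mul]
      exact mem_adu_of_dist2 hCv hsub (Da_mem_IPO a) (Da_ne_bot ha0)
        (Or.inl hLaDa) (left_mem_IPO hJl) hJ0 (Or.inl hJDa)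
    · intro J hJl hJ0 hJr
      have hJDa : J * Da a = ⊥ := by
        refine (mul_eq_bot_iff' _ _).2 fun x hx y hy => ?_
        obtain ⟨s, rfl⟩ := hy
        obtain ⟨r, rfl⟩ := hJr x hx
        show r * a * (a * s) = 0
        rw [mul_assoc, ← mul_assoc a a s, haa, zero_mul, mul_zero]
      exact mem_adu_of_dist2 hCv hsub (Da_mem_IPO a) (Da_ne_bot ha0)
        (Or.inl hLaDa) (left_mem_IPO hJl) hJ0 (Or.inl hJDa)
  · refine master_right a ?_ ?_ haccR
    · intro K hK hK0 hKa
      have hLaK : La a * K = ⊥ := by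
        refine (mul_eq_bot_iff' _ _).2 fun x hx y hy => ?_
        obtain ⟨r, rfl⟩ := hx
        show r * a * y = 0
        rw [mul_assoc, hKa y hy, mul_zero]
      exact mem_adu_of_adj hCv hsub (right_mem_IPO hK) hK0 (Or.inr hLaK)
    · intro K hK hK0 hKr
      have hLaK : La a * K = ⊥ := by
        refine (mul_eq_bot_iff' _ _).2 fun x hx y hy => ?_
        obtain ⟨r, rfl⟩ := hx
        obtain ⟨s, rfl⟩ := hKr y hy
        show r * a * (a * s) = 0
        rw [mul_assoc, ← mul_assoc a a s, haa, zero_mul, mul_zero]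
      exact mem_adu_of_adj hCv hsub (right_mem_IPO hK) hK0 (Or.inr hLaK)

/-- Case: a nonzero `a ∈ I` with `a*a = 0`, where `I` is a right ideal. -/
lemma conclude_right_sq {I : AddSubgroup R} (hIr : IsRightIdeal R I)
    {a : R} (ha0 : a ≠ 0) (haI : a ∈ I) (haa : a * a = 0)
    (haccL : ACCOn R (adu R I ∩ {J | IsLeftIdeal R J}))
    (haccR : ACCOn R (adu R I ∩ {J | IsRightIdeal R J})) :
    ACCOn R {J | IsLeftIdeal R J} ∧ ACCOn R {J | IsRightIdeal R J} := by
  have hsub : Da a ≤ I := by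
    rintro x ⟨s, rfl⟩
    exact hIr s a haI
  have hLaDa : La a * Da a = ⊥ := by
    refine (mul_eq_bot_iff' _ _).2 fun x hx y hy => ?_
    obtain ⟨r, rfl⟩ := hx
    obtain ⟨s, rfl⟩ := hy
    show r * a * (a * s) = 0
    rw [mul_assoc, ← mul_assoc a a s, haa, zero_mul, mul_zero]
  have hCv : APOGVertex R (Da a) :=
    vertex_of (Da_mem_IPO a) (Da_ne_bot ha0) (La_mem_IPO a) (La_ne_bot ha0)
      (Or.inr hLaDa)
  constructor
  · refine master_left a ?_ ?_ haccL
    · intro J hJl hJ0 hJa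
      have hJDa : J * Da a = ⊥ := by
        refine (mul_eq_bot_iff' _ _).2 fun x hx y hy => ?_
        obtain ⟨s, rfl⟩ := hy
        show x * (a * s) = 0
        rw [← mul_assoc, hJa x hx, zero_mul]
      exact mem_adu_of_adj hCv hsub (left_mem_IPO hJl) hJ0 (Or.inl hJDa)
    · intro J hJl hJ0 hJr
      have hJDa : J * Da a = ⊥ := by
        refine (mul_eq_bot_iff' _ _).2 fun x hx y hy => ?_
        obtain ⟨s, rfl⟩ := hy
        obtain ⟨r, rfl⟩ := hJr x hx
        show r * a * (a * s) = 0
        rw [mul_assoc, ← mul_assoc a a s, haa, zero_mul, mul_zero]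
      exact mem_adu_of_adj hCv hsub (left_mem_IPO hJl) hJ0 (Or.inl hJDa)
  · refine master_right a ?_ ?_ haccR
    · intro K hK hK0 hKa
      have hLaK : La a * K = ⊥ := by
        refine (mul_eq_bot_iff' _ _).2 fun x hx y hy => ?_
        obtain ⟨r, rfl⟩ := hx
        show r * a * y = 0
        rw [mul_assoc, hKa y hy, mul_zero]
      exact mem_adu_of_dist2 hCv hsub (La_mem_IPO a) (La_ne_bot ha0)
        (Or.inr hLaDa) (right_mem_IPO hK) hK0 (Or.inr hLaK)
    · intro K hK hK0 hKr
      have hLaK : La a * K = ⊥ := by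
        refine (mul_eq_bot_iff' _ _).2 fun x hx y hy => ?_
        obtain ⟨r, rfl⟩ := hx
        obtain ⟨s, rfl⟩ := hKr y hy
        show r * a * (a * s) = 0
        rw [mul_assoc, ← mul_assoc a a s, haa, zero_mul, mul_zero]
      exact mem_adu_of_dist2 hCv hsub (La_mem_IPO a) (La_ne_bot ha0)
        (Or.inr hLaDa) (right_mem_IPO hK) hK0 (Or.inr hLaK)

end Cases

/-- Suppose `APOG(R) ≠ ∅` and `I` is a one-sided ideal of `R` which is a
vertex of `APOG(R)`.  Then `R` is left and right Noetherian iff `adu(I)` has ACC both on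
its members that are left ideals and on its members that are right ideals. -/
theorem noetherian_iff_adu_acc (R : Type*) [Ring R]
    (hne : ∃ A : AddSubgroup R, APOGVertex R A)
    (I : AddSubgroup R) (hI : IsOneSidedIdeal R I) (hIv : APOGVertex R I) :
    (ACCOn R {J | IsLeftIdeal R J} ∧ ACCOn R {J | IsRightIdeal R J}) ↔
      (ACCOn R (adu R I ∩ {J | IsLeftIdeal R J}) ∧
        ACCOn R (adu R I ∩ {J | IsRightIdeal R J})) := by
  constructor
  · rintro ⟨hL, hR⟩
    exact ⟨fun f hf hm => hL f (fun n => (hf n).2) hm,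
      fun f hf hm => hR f (fun n => (hf n).2) hm⟩
  · rintro ⟨haccL, haccR⟩
    have hIv' := hIv
    obtain ⟨_, _, B₀, hB₀IPO, hB₀0, hann⟩ := hIv
    obtain ⟨b, hbB, hb0⟩ := exists_ne_zero_of_ne_bot hB₀0
    rcases hann with hIB | hBI
    · -- I * B₀ = ⊥
      have hIb : ∀ i ∈ I, i * b = 0 :=
        fun i hi => (mul_eq_bot_iff' _ _).1 hIB i hi b hbB
      rcases hI with hIl | hIr
      · -- I is a left ideal
        by_cases hex : ∃ a, a ∈ I ∧ a ≠ 0 ∧ ∀ i ∈ I, i * a = 0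
        · obtain ⟨a, haI, ha0, hIa⟩ := hex
          exact conclude_left_sq hIl ha0 haI (hIa a haI) haccL haccR
        · push_neg at hex
          have hbI : ∀ i ∈ I, b * i = 0 := by
            intro i hi
            have hyI : b * i ∈ I := hIl b i hi
            have hy : ∀ i' ∈ I, i' * (b * i) = 0 := by
              intro i' hi'
              rw [← mul_assoc, hIb i' hi', zero_mul]
            by_contra hy0
            obtain ⟨i', hi', hne'⟩ := hex (b * i) hyI hy0
            exact hne' (hy i' hi')
          exact conclude_two_sided hIv' hb0 hIb hbI haccL haccR
      · -- I is a right ideal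
        exact conclude_right_annr hIv' hIr hb0 hIb haccL haccR
    · -- B₀ * I = ⊥
      have hbI : ∀ i ∈ I, b * i = 0 :=
        fun i hi => (mul_eq_bot_iff' _ _).1 hBI b hbB i hi
      rcases hI with hIl | hIr
      · -- I is a left ideal
        exact conclude_left_annl hIv' hIl hb0 hbI haccL haccR
      · -- I is a right ideal
        by_cases hex : ∃ a, a ∈ I ∧ a ≠ 0 ∧ ∀ i ∈ I, a * i = 0
        · obtain ⟨a, haI, ha0, haI'⟩ := hex
          exact conclude_right_sq hIr ha0 haI (haI' a haI) haccL haccR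
        · push_neg at hex
          have hIb : ∀ i ∈ I, i * b = 0 := by
            intro i hi
            have hyI : i * b ∈ I := hIr b i hi
            have hy : ∀ i' ∈ I, (i * b) * i' = 0 := by
              intro i' hi'
              rw [mul_assoc, hbI i' hi', mul_zero]
            by_contra hy0
            obtain ⟨i', hi', hne'⟩ := hex (i * b) hyI hy0
            exact hne' (hy i' hi')
          exact conclude_two_sided hIv' hb0 hIb hbI haccL haccR
end
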